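/- arXiv:1809.08454 — 3 statements merged into one kernel-verified Lean document; each statement's English description precedes it below -/
import Mathlib

section
/- Let A_n satisfy Assumption (A) with parameter p = p_n ∈ (0,1) such that np ≤ log(1/p). Then there exists an absolute constant C̄ < ∞ such that P(Ω₀) ≥ 1 − C̄/log n. In particular this holds for a matrix with i.i.d. Ber(p) entries and for the adjacency matrices of the undirected Erdős–Rényi graph, the directed Erdős–Rényi graph, and the random bipartite graph. -/
set_option maxHeartbeats 1600000


open MeasureTheory ProbabilityTheory Filter Matrix
open scoped ENNReal NNReal

noncomputable section

/-- Euclidean norm of a vector in `ℝ^n`. -/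
def vnorm {n : ℕ} (x : Fin n → ℝ) : ℝ := Real.sqrt (∑ i, x i ^ 2)

/-- The event that a matrix has a zero row or a zero column. -/
def hasZeroRowOrCol {n : ℕ} (A : Matrix (Fin n) (Fin n) ℝ) : Prop :=
  (∃ i, ∀ j, A i j = 0) ∨ (∃ j, ∀ i, A i j = 0)

/-- The smallest singular value `s_min(A) = inf_{‖x‖₂ = 1} ‖Ax‖₂`. -/
def sMin {n : ℕ} (A : Matrix (Fin n) (Fin n) ℝ) : ℝ :=
  sInf {r | ∃ x : Fin n → ℝ, vnorm x = 1 ∧ r = vnorm (A.mulVec x)}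

/-- The `ℓ₂ → ℓ₂` operator norm of a matrix. -/
def opNorm {m n : ℕ} (A : Matrix (Fin m) (Fin n) ℝ) : ℝ :=
  sSup {r | ∃ x : Fin n → ℝ, vnorm x = 1 ∧ r = vnorm (A.mulVec x)}

/-- `X` is a Bernoulli(p) random variable: it takes the value `1` with probability `p`
and the value `0` with probability `1 - p`. -/
def IsBer {Ωs : Type*} [MeasurableSpace Ωs] (P : Measure Ωs) (p : ℝ) (X : Ωs → ℝ) : Prop :=
  Measurable X ∧ P {ω | X ω = 1} = ENNReal.ofReal p ∧ P {ω | X ω = 0} = ENNReal.ofReal (1 - p)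

/-- The family `X` consists of i.i.d. Bernoulli(p) random variables. -/
def IIDBer {Ωs : Type*} [MeasurableSpace Ωs] {ι : Type*} (P : Measure Ωs) (p : ℝ)
    (X : ι → Ωs → ℝ) : Prop :=
  iIndepFun X P ∧ ∀ i, IsBer P p (X i)

/-- Assumption (A): `{0,1}`-valued entries; diagonal and off-diagonal parts independent;
diagonal entries jointly independent, `a_{ii} ~ Ber(p_i)` with `p_i ≤ p`; each off-diagonal
entry is `Ber(p)` and independent of all other entries except possibly its mirror entry. -/
structure AssumptionA {Ωs : Type*} [MeasurableSpace Ωs] (P : Measure Ωs) {n : ℕ}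
    (p : ℝ) (A : Ωs → Matrix (Fin n) (Fin n) ℝ) : Prop where
  zero_one : ∀ ω i j, A ω i j = 0 ∨ A ω i j = 1
  diag_offdiag_indep :
    IndepFun (fun ω => fun i : Fin n => A ω i i)
      (fun ω => fun q : {q : Fin n × Fin n // q.1 ≠ q.2} => A ω q.1.1 q.1.2) P
  diag_indep : iIndepFun (fun i : Fin n => fun ω => A ω i i) P
  diag_ber : ∀ i, ∃ pi : ℝ, pi ≤ p ∧ IsBer P pi (fun ω => A ω i i)
  offdiag_ber : ∀ i j, i ≠ j → IsBer P p (fun ω => A ω i j)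
  offdiag_indep : ∀ i j : Fin n, i ≠ j →
    IndepFun (fun ω => A ω i j)
      (fun ω => fun q : {q : Fin n × Fin n // q ≠ (i, j) ∧ q ≠ (j, i)} => A ω q.1.1 q.1.2) P


/- ### Auxiliary lemmas -/

lemma exp_two_le_nine : Real.exp 2 ≤ 9 := by
  have h := Real.exp_one_lt_d9
  have : Real.exp 2 = Real.exp 1 * Real.exp 1 := by
    rw [← Real.exp_add]; norm_num
  nlinarith [Real.exp_pos 1]

lemma log_le_half {L : ℝ} (hL : 0 < L) : Real.log L ≤ L / 2 := by
  rcases le_or_gt L 1 with h | h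
  · have := Real.log_nonpos hL.le h
    linarith
  · set x := Real.sqrt L with hx
    have hx2 : x ^ 2 = L := Real.sq_sqrt hL.le
    have hx0 : 0 ≤ x := Real.sqrt_nonneg L
    have hx1 : 1 ≤ x := by nlinarith
    have hlog : Real.log L = 2 * Real.log x := by
      rw [← hx2, Real.log_pow]; push_cast; ring
    have h2 := Real.log_le_sub_one_of_pos (show (0:ℝ) < x by linarith)
    nlinarith [sq_nonneg (x - 2)]

lemma endalg {M K q m s u L p : ℝ} (hM0 : 0 < M) (hK0 : 0 < K)
    (hKq : K * q ^ 3 = M ^ 2) (hq31 : q ^ 3 ≤ 1) (hq3p : 1 - q ^ 3 ≤ 3 * p)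
    (hp0 : 0 ≤ p) (hL : 0 < L) (hM : L / 18 ≤ M) (hpL : p * L ≤ 2)
    (hmM : M ≤ m) (hsK : s ≤ m + K)
    (hkey : ∀ t : ℝ, 0 ≤ t → t ≤ 1 → 2 * t * m ≤ u + t ^ 2 * s) :
    1 - 24 / L ≤ u := by
  have hKq3 : K * q ^ 3 ≤ K * 1 := mul_le_mul_of_nonneg_left hq31 hK0.le
  have hMK : M ^ 2 ≤ M + K := by nlinarith [hKq, hKq3, hM0]
  have hMKpos : 0 < M + K := by linarith
  set t := M / (M + K) with htdef
  have ht0 : 0 ≤ t := div_nonneg hM0.le hMKpos.le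
  have ht1 : t ≤ 1 := by rw [htdef, div_le_one hMKpos]; linarith
  have hkey' := hkey t ht0 ht1
  have htid : 2 * t * M - t ^ 2 * (M + K) = M ^ 2 / (M + K) := by
    rw [htdef]; field_simp; ring
  have hu : M ^ 2 / (M + K) ≤ u := by
    have e1 : t ^ 2 * s ≤ t ^ 2 * (m + K) := mul_le_mul_of_nonneg_left hsK (sq_nonneg t)
    have e2 : 2 * t * M - t ^ 2 * M ≤ 2 * t * m - t ^ 2 * m := by
      nlinarith [mul_nonneg (mul_nonneg ht0 (by linarith : (0:ℝ) ≤ 2 - t))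
        (by linarith : (0:ℝ) ≤ m - M)]
    linarith [htid, hkey', e1, e2]
  have hb1 : M / (M + K) ≤ 1 / M := by
    rw [div_le_div_iff₀ hMKpos hM0]; nlinarith [hMK, hM0]
  have hb2 : (K - M ^ 2) / (M + K) ≤ 3 * p := by
    rw [div_le_iff₀ hMKpos]
    have e3 : K * (1 - q ^ 3) ≤ K * (3 * p) := mul_le_mul_of_nonneg_left hq3p hK0.le
    nlinarith [hKq, e3, hM0.le, hp0]
  have hexpand : 1 - M ^ 2 / (M + K) = M / (M + K) + (K - M ^ 2) / (M + K) := by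
    field_simp
    ring
  have h1M : 1 / M ≤ 18 / L := by
    rw [div_le_div_iff₀ hM0 hL]; linarith
  have h3p : 3 * p ≤ 6 / L := by
    rw [le_div_iff₀ hL]; linarith
  have hfinal : 1 - u ≤ 24 / L := by
    have h5 : 1 - M ^ 2 / (M + K) ≤ 1 / M + 3 * p := by rw [hexpand]; linarith
    have e : 18 / L + 6 / L = 24 / L := by ring
    linarith
  linarith

lemma endgame {n : ℕ} (hn : 2 ≤ n) {p m s u : ℝ} (hp : 0 < p) (hp1 : p < 1)
    (hc : (n : ℝ) * p ≤ Real.log (1 / p))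
    (hm : (n : ℝ) * (1 - p) ^ n ≤ m)
    (hs : s ≤ m + (n : ℝ) ^ 2 * (1 - p) ^ (n - 1 + (n - 2)))
    (hkey : ∀ t : ℝ, 0 ≤ t → t ≤ 1 → 2 * t * m ≤ u + t ^ 2 * s) :
    1 - 24 / Real.log n ≤ u := by
  have hn1 : (1 : ℝ) < n := by exact_mod_cast Nat.lt_of_lt_of_le one_lt_two hn
  have hn2 : (2 : ℝ) ≤ n := by exact_mod_cast hn
  have hn0 : (0 : ℝ) < n := by linarith
  set L := Real.log n with hLdef
  have hL : 0 < L := Real.log_pos hn1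
  set q := 1 - p with hqdef
  have hq0 : 0 < q := by simp [hqdef]; linarith
  -- p ≤ 1/2
  have hp_half : p ≤ 1 / 2 := by
    by_contra h
    push_neg at h
    have h1 : Real.log (1 / p) ≤ 1 / p - 1 := Real.log_le_sub_one_of_pos (by positivity)
    have h2 : 1 / p < 2 := by rw [div_lt_iff₀ hp]; linarith
    have h3 : 2 * p ≤ (n : ℝ) * p := by nlinarith
    linarith
  -- p ≤ exp (-np)
  have hpexp : p ≤ Real.exp (-((n : ℝ) * p)) := by
    have hlogp : Real.log p ≤ -((n : ℝ) * p) := by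
      have : Real.log (1 / p) = -Real.log p := by rw [one_div, Real.log_inv]
      linarith [hc, this ▸ hc]
    calc p = Real.exp (Real.log p) := (Real.exp_log hp).symm
      _ ≤ _ := Real.exp_le_exp.2 hlogp
  -- p log(1/p) ≤ 1
  have hplog : p * Real.log (1 / p) ≤ 1 := by
    have h1 : Real.log (1 / p) ≤ 1 / p - 1 := Real.log_le_sub_one_of_pos (by positivity)
    have h2 : p * (1 / p) = 1 := by field_simp
    nlinarith
  have hnp2 : (n : ℝ) * p ^ 2 ≤ 1 := by
    have : (n : ℝ) * p ^ 2 = ((n : ℝ) * p) * p := by ring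
    rw [this]
    calc ((n : ℝ) * p) * p ≤ Real.log (1 / p) * p := by nlinarith
      _ = p * Real.log (1 / p) := by ring
      _ ≤ 1 := hplog
  -- q^n ≥ exp(-np - 2)
  have hqn : Real.exp (-((n : ℝ) * p) - 2) ≤ q ^ n := by
    have hlogq : -(p + 2 * p ^ 2) ≤ Real.log q := by
      have h1 : Real.log (1 / q) ≤ 1 / q - 1 := Real.log_le_sub_one_of_pos (by positivity)
      have h2 : Real.log (1 / q) = -Real.log q := by rw [one_div, Real.log_inv]
      have h3 : 1 / q ≤ 1 + 2 * p := by
        rw [div_le_iff₀ hq0]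
        nlinarith
      have h4 : 1 / q - 1 = p * (1 / q) := by
        field_simp
        rw [hqdef]; ring
      have h5 : p * (1 / q) ≤ p * (1 + 2 * p) := mul_le_mul_of_nonneg_left h3 hp.le
      have h6 : p * (1 + 2 * p) = p + 2 * p ^ 2 := by ring
      linarith
    have h4 : -((n : ℝ) * p) - 2 ≤ (n : ℝ) * Real.log q := by
      have h5 : (n : ℝ) * (-(p + 2 * p ^ 2)) ≤ (n : ℝ) * Real.log q :=
        mul_le_mul_of_nonneg_left hlogq (by linarith)
      nlinarith
    calc Real.exp (-((n : ℝ) * p) - 2) ≤ Real.exp ((n : ℝ) * Real.log q) :=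
          Real.exp_le_exp.2 h4
      _ = Real.exp (Real.log q) ^ n := Real.exp_nat_mul _ n
      _ = q ^ n := by rw [Real.exp_log hq0]
  have hexp2 : (1 : ℝ) / 9 ≤ Real.exp (-(2:ℝ)) := by
    rw [Real.exp_neg, one_div]
    exact inv_anti₀ (Real.exp_pos 2) exp_two_le_nine
  -- M ≥ L / 18
  have hM : L / 18 ≤ (n : ℝ) * q ^ n := by
    have hsplitexp : Real.exp (-((n : ℝ) * p) - 2)
        = Real.exp (-((n : ℝ) * p)) * Real.exp (-(2:ℝ)) := by
      rw [← Real.exp_add]; ring_nf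
    rcases le_or_gt ((n : ℝ) * p) (L - Real.log L) with hcase | hcase
    · have h1 : Real.exp (Real.log L - L) ≤ Real.exp (-((n : ℝ) * p)) :=
        Real.exp_le_exp.2 (by linarith)
      have h2 : Real.exp (Real.log L - L) = L / n := by
        rw [Real.exp_sub, Real.exp_log hL, hLdef, Real.exp_log hn0]
      have h3 : (L / n) * (1 / 9) ≤ q ^ n := by
        calc (L / n) * (1 / 9) ≤ Real.exp (-((n : ℝ) * p)) * Real.exp (-(2:ℝ)) := by
              apply mul_le_mul _ hexp2 (by norm_num) (Real.exp_pos _).le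
              rw [← h2]; exact h1
          _ = Real.exp (-((n : ℝ) * p) - 2) := hsplitexp.symm
          _ ≤ q ^ n := hqn
      have h4 : (n : ℝ) * ((L / n) * (1 / 9)) = L / 9 := by field_simp
      nlinarith [mul_le_mul_of_nonneg_left h3 hn0.le]
    · have hlogL := log_le_half hL
      have h3 : p * (1 / 9) ≤ q ^ n := by
        calc p * (1 / 9) ≤ Real.exp (-((n : ℝ) * p)) * Real.exp (-(2:ℝ)) :=
              mul_le_mul hpexp hexp2 (by norm_num) (Real.exp_pos _).le
          _ = Real.exp (-((n : ℝ) * p) - 2) := hsplitexp.symm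
          _ ≤ q ^ n := hqn
      have h5 : (n : ℝ) * (p * (1 / 9)) ≤ (n : ℝ) * q ^ n :=
        mul_le_mul_of_nonneg_left h3 hn0.le
      have h6 : L / 2 ≤ (n : ℝ) * p := by linarith
      nlinarith
  -- p * L ≤ 2
  have hpL : p * L ≤ 2 := by
    set x := Real.sqrt n with hxdef
    have hx2 : x ^ 2 = (n : ℝ) := Real.sq_sqrt hn0.le
    have hx0 : 0 ≤ x := Real.sqrt_nonneg _
    have hx1 : 1 ≤ x := by nlinarith
    have hlogn : L = 2 * Real.log x := by
      rw [hLdef, ← hx2, Real.log_pow]; push_cast; ring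
    have hlogx : Real.log x ≤ x - 1 := Real.log_le_sub_one_of_pos (by linarith)
    have hlogx0 : 0 ≤ Real.log x := Real.log_nonneg hx1
    rcases le_or_gt (p * x) 1 with h | h
    · nlinarith [mul_le_mul_of_nonneg_left hlogx hp.le, h, hp.le]
    · have h4 : 1 / p ≤ x := by
        rw [div_le_iff₀ hp]; nlinarith
      have h5 : Real.log (1 / p) ≤ Real.log x := Real.log_le_log (by positivity) h4
      have h6 : (n : ℝ) * p ≤ Real.log x := le_trans hc h5
      have h7 : p * (n:ℝ) ≤ Real.log x := by linarith [h6]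
      -- p ≤ log x / x², pL = 2 p log x ≤ 2 (log x)²/x² ≤ 2
      have h8 : p * x ^ 2 ≤ Real.log x := by rw [hx2]; linarith
      have h9 : p * L = 2 * (p * Real.log x) := by rw [hlogn]; ring
      rw [h9]
      have h10 : p * Real.log x * x ^ 2 ≤ Real.log x * Real.log x := by
        nlinarith [mul_le_mul_of_nonneg_left h8 hlogx0]
      have h11 : Real.log x * Real.log x ≤ (x - 1) * (x - 1) := by nlinarith
      have h12 : (x - 1) * (x - 1) ≤ x ^ 2 := by nlinarith
      have hx2pos : 0 < x ^ 2 := by nlinarith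
      have h13 : p * Real.log x * x ^ 2 ≤ 1 * x ^ 2 := by nlinarith
      have h14 : p * Real.log x ≤ 1 := le_of_mul_le_mul_right (by linarith) hx2pos
      linarith
  have hKq : ((n : ℝ) ^ 2 * q ^ (n - 1 + (n - 2))) * q ^ 3 = ((n : ℝ) * q ^ n) ^ 2 := by
    have he3 : (n - 1 + (n - 2)) + 3 = n + n := by omega
    rw [mul_assoc, ← pow_add, he3, mul_pow, pow_add]
    ring
  have hq1 : q ≤ 1 := by rw [hqdef]; linarith
  have hq31 : q ^ 3 ≤ 1 := by
    calc q ^ 3 ≤ 1 ^ 3 := pow_le_pow_left₀ hq0.le hq1 3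
      _ = 1 := one_pow 3
  have hq3p : 1 - q ^ 3 ≤ 3 * p := by
    have hq3e : q ^ 3 = (1 - p) ^ 3 := by rw [hqdef]
    nlinarith [hq3e, hp.le, hp1.le, sq_nonneg p, mul_nonneg hp.le hp.le]
  exact endalg (mul_pos hn0 (pow_pos hq0 _)) (mul_pos (pow_pos hn0 2) (pow_pos hq0 _))
    hKq hq31 hq3p hp.le hL hM hpL hm hs hkey

lemma two_mul_le_one_add_sq (c : ℝ≥0∞) : 2 * c ≤ 1 + c ^ 2 := by
  rcases eq_or_ne c ⊤ with rfl | hc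
  · simp
  · lift c to ℝ≥0 using hc
    have h : (2 : ℝ≥0) * c ≤ 1 + c ^ 2 := by
      rw [← NNReal.coe_le_coe]
      push_cast
      nlinarith [sq_nonneg ((c : ℝ) - 1)]
    calc (2 : ℝ≥0∞) * c = ((2 * c : ℝ≥0) : ℝ≥0∞) := by push_cast; ring
      _ ≤ ((1 + c ^ 2 : ℝ≥0) : ℝ≥0∞) := by exact_mod_cast ENNReal.coe_le_coe.2 h
      _ = 1 + (c : ℝ≥0∞) ^ 2 := by push_cast; ring

lemma ind_mul_ind {α : Type*} (s t : Set α) (ω : α) :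
    s.indicator (1 : α → ℝ≥0∞) ω * t.indicator 1 ω = (s ∩ t).indicator 1 ω := by
  by_cases hs : ω ∈ s <;> by_cases ht : ω ∈ t <;>
    simp [Set.indicator_apply, hs, ht, Set.mem_inter_iff]


section Aux

variable {Ωs : Type} [MeasurableSpace Ωs] {P : Measure Ωs} {n : ℕ} {p : ℝ}
  {A : Ωs → Matrix (Fin n) (Fin n) ℝ}

lemma meas_entry (hA : AssumptionA P p A) (i j : Fin n) :
    Measurable fun ω => A ω i j := by
  by_cases h : i = j
  · subst h; obtain ⟨pi, _, hm, _⟩ := hA.diag_ber i; exact hm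
  · exact (hA.offdiag_ber i j h).1

lemma prod_zero (hA : AssumptionA P p A) [IsProbabilityMeasure P] (s : Finset (Fin n × Fin n)) :
    (∀ q ∈ s, q.1 ≠ q.2) → (∀ q ∈ s, (q.2, q.1) ∉ s) →
    P {ω | ∀ q ∈ s, A ω q.1 q.2 = 0} = ENNReal.ofReal (1 - p) ^ s.card := by
  classical
  induction s using Finset.induction_on with
  | empty => intro _ _; simp
  | @insert a s ha ih =>
    intro hod hmir
    obtain ⟨i, j⟩ := a
    have hij : i ≠ j := hod (i, j) (Finset.mem_insert_self _ _)
    have hmirr : ((j : Fin n), (i : Fin n)) ∉ insert (i, j) s := hmir (i, j) (Finset.mem_insert_self _ _)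
    -- subtype proofs for elements of s
    have hqs : ∀ q ∈ s, q ≠ ((i : Fin n), j) ∧ q ≠ (j, i) := by
      intro q hq
      constructor
      · rintro rfl; exact ha hq
      · rintro rfl; exact hmirr (Finset.mem_insert_of_mem hq)
    set T : Set ({q : Fin n × Fin n // q ≠ (i, j) ∧ q ≠ (j, i)} → ℝ) :=
      {g | ∀ q : {q : Fin n × Fin n // q ≠ (i, j) ∧ q ≠ (j, i)}, q.1 ∈ s → g q = 0} with hTdef
    have hTm : MeasurableSet T := by
      have : T = ⋂ q : {q : Fin n × Fin n // q ≠ (i, j) ∧ q ≠ (j, i)},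
          {g | q.1 ∈ s → g q = 0} := by
        ext g; simp [hTdef, Set.mem_iInter]
      rw [this]
      refine MeasurableSet.iInter fun q => ?_
      by_cases h : q.1 ∈ s
      · have : {g : {q : Fin n × Fin n // q ≠ (i, j) ∧ q ≠ (j, i)} → ℝ | q.1 ∈ s → g q = 0}
            = (fun g => g q) ⁻¹' {0} := by ext g; simp [h]
        rw [this]; exact measurable_pi_apply q (measurableSet_singleton 0)
      · have : {g : {q : Fin n × Fin n // q ≠ (i, j) ∧ q ≠ (j, i)} → ℝ | q.1 ∈ s → g q = 0}
            = Set.univ := by ext g; simp [h]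
        rw [this]; exact MeasurableSet.univ
    have hpre : (fun ω => fun q : {q : Fin n × Fin n // q ≠ (i, j) ∧ q ≠ (j, i)} =>
          A ω q.1.1 q.1.2) ⁻¹' T = {ω | ∀ q ∈ s, A ω q.1 q.2 = 0} := by
      ext ω
      constructor
      · intro h q hq
        exact h ⟨q, hqs q hq⟩ hq
      · intro h q hq
        exact h q.1 hq
    have hsplit : {ω | ∀ q ∈ insert (i, j) s, A ω q.1 q.2 = 0}
        = ((fun ω => A ω i j) ⁻¹' {0}) ∩
          ((fun ω => fun q : {q : Fin n × Fin n // q ≠ (i, j) ∧ q ≠ (j, i)} =>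
            A ω q.1.1 q.1.2) ⁻¹' T) := by
      rw [hpre]
      ext ω
      simp only [Set.mem_setOf_eq, Set.mem_inter_iff, Set.mem_preimage, Set.mem_singleton_iff,
        Finset.mem_insert]
      constructor
      · intro h
        exact ⟨h (i, j) (Or.inl rfl), fun q hq => h q (Or.inr hq)⟩
      · rintro ⟨h0, hrest⟩ q (rfl | hq)
        · exact h0
        · exact hrest q hq
    have hmul := (hA.offdiag_indep i j hij).measure_inter_preimage_eq_mul {0} T
      (measurableSet_singleton 0) hTm
    have h0 : P ((fun ω => A ω i j) ⁻¹' {0}) = ENNReal.ofReal (1 - p) := by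
      have : (fun ω => A ω i j) ⁻¹' {0} = {ω | A ω i j = 0} := by ext ω; simp
      rw [this]; exact (hA.offdiag_ber i j hij).2.2
    have hrest : P ((fun ω => fun q : {q : Fin n × Fin n // q ≠ (i, j) ∧ q ≠ (j, i)} =>
        A ω q.1.1 q.1.2) ⁻¹' T) = ENNReal.ofReal (1 - p) ^ s.card := by
      rw [hpre]
      exact ih (fun q hq => hod q (Finset.mem_insert_of_mem hq))
        (fun q hq h' => hmir q (Finset.mem_insert_of_mem hq) (Finset.mem_insert_of_mem h'))
    rw [hsplit, hmul, h0, hrest, Finset.card_insert_of_notMem ha, pow_succ, mul_comm]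


/-- the set of off-diagonal positions of row `i` -/
def srow (n : ℕ) (i : Fin n) : Finset (Fin n × Fin n) :=
  (Finset.univ.erase i).image fun j => (i, j)

lemma srow_mem {i : Fin n} {q : Fin n × Fin n} :
    q ∈ srow n i ↔ q.1 = i ∧ q.2 ≠ i := by
  unfold srow
  constructor
  · intro hq
    obtain ⟨j, hj, rfl⟩ := Finset.mem_image.1 hq
    exact ⟨rfl, (Finset.mem_erase.1 hj).1⟩
  · rintro ⟨h1, h2⟩
    exact Finset.mem_image.2 ⟨q.2, Finset.mem_erase.2 ⟨h2, Finset.mem_univ _⟩, by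
      rw [← h1]⟩

lemma srow_card (i : Fin n) : (srow n i).card = n - 1 := by
  unfold srow
  rw [Finset.card_image_of_injective _ (fun a b h => (Prod.ext_iff.1 h).2),
    Finset.card_erase_of_mem (Finset.mem_univ i), Finset.card_univ, Fintype.card_fin]

lemma srow_od {i : Fin n} : ∀ q ∈ srow n i, q.1 ≠ q.2 := by
  intro q hq
  obtain ⟨h1, h2⟩ := srow_mem.1 hq
  rw [h1]; exact fun h => h2 h.symm

lemma row_prob_ge (hA : AssumptionA P p A) [IsProbabilityMeasure P] (hp1 : p ≤ 1)
    (hn : 1 ≤ n) (i : Fin n) :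
    ENNReal.ofReal ((1 - p) ^ n) ≤ P {ω | ∀ j, A ω i j = 0} := by
  classical
  -- the off-diagonal part
  have hO : P {ω | ∀ q ∈ srow n i, A ω q.1 q.2 = 0} = ENNReal.ofReal (1 - p) ^ (n - 1) := by
    rw [prod_zero hA (srow n i) srow_od (fun q hq h' => by
      obtain ⟨h1, h2⟩ := srow_mem.1 hq
      obtain ⟨h1', h2'⟩ := srow_mem.1 h'
      exact h2' (h1 ▸ rfl)), srow_card]
  -- measurable target sets
  have hT1 : MeasurableSet {g : Fin n → ℝ | g i = 0} := by
    have : {g : Fin n → ℝ | g i = 0} = (fun g : Fin n → ℝ => g i) ⁻¹' {0} := rfl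
    rw [this]; exact measurable_pi_apply i (measurableSet_singleton 0)
  have hT2 : MeasurableSet {g : {q : Fin n × Fin n // q.1 ≠ q.2} → ℝ |
      ∀ q : {q : Fin n × Fin n // q.1 ≠ q.2}, q.1 ∈ srow n i → g q = 0} := by
    have : {g : {q : Fin n × Fin n // q.1 ≠ q.2} → ℝ |
        ∀ q : {q : Fin n × Fin n // q.1 ≠ q.2}, q.1 ∈ srow n i → g q = 0}
        = ⋂ q : {q : Fin n × Fin n // q.1 ≠ q.2}, {g | q.1 ∈ srow n i → g q = 0} := by
      ext g; simp [Set.mem_iInter]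
    rw [this]
    refine MeasurableSet.iInter fun q => ?_
    by_cases h : q.1 ∈ srow n i
    · have : {g : {q : Fin n × Fin n // q.1 ≠ q.2} → ℝ | q.1 ∈ srow n i → g q = 0}
          = (fun g => g q) ⁻¹' {0} := by ext g; simp [h]
      rw [this]; exact measurable_pi_apply q (measurableSet_singleton 0)
    · have : {g : {q : Fin n × Fin n // q.1 ≠ q.2} → ℝ | q.1 ∈ srow n i → g q = 0}
          = Set.univ := by ext g; simp [h]
      rw [this]; exact MeasurableSet.univ
  -- splitting
  have hpre2 : (fun ω => fun q : {q : Fin n × Fin n // q.1 ≠ q.2} => A ω q.1.1 q.1.2) ⁻¹'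
      {g | ∀ q : {q : Fin n × Fin n // q.1 ≠ q.2}, q.1 ∈ srow n i → g q = 0}
      = {ω | ∀ q ∈ srow n i, A ω q.1 q.2 = 0} := by
    ext ω
    constructor
    · intro h q hq
      exact h ⟨q, srow_od q hq⟩ hq
    · intro h q hq
      exact h q.1 hq
  have hsplit : {ω | ∀ j, A ω i j = 0}
      = ((fun ω => fun k : Fin n => A ω k k) ⁻¹' {g | g i = 0}) ∩
        ((fun ω => fun q : {q : Fin n × Fin n // q.1 ≠ q.2} => A ω q.1.1 q.1.2) ⁻¹'
          {g | ∀ q : {q : Fin n × Fin n // q.1 ≠ q.2}, q.1 ∈ srow n i → g q = 0}) := by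
    rw [hpre2]
    ext ω
    simp only [Set.mem_setOf_eq, Set.mem_inter_iff, Set.mem_preimage]
    constructor
    · intro h
      refine ⟨h i, fun q hq => ?_⟩
      obtain ⟨h1, _⟩ := srow_mem.1 hq
      rw [show q = (i, q.2) from Prod.ext h1 rfl]
      exact h q.2
    · rintro ⟨hd, ho⟩ j
      by_cases hji : j = i
      · subst hji; exact hd
      · exact ho (i, j) (srow_mem.2 ⟨rfl, hji⟩)
  have hmul := hA.diag_offdiag_indep.measure_inter_preimage_eq_mul _ _ hT1 hT2
  obtain ⟨pi, hpip, _, _, hpi0⟩ := hA.diag_ber i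
  have hd : P ((fun ω => fun k : Fin n => A ω k k) ⁻¹' {g | g i = 0})
      = ENNReal.ofReal (1 - pi) := by
    have : (fun ω => fun k : Fin n => A ω k k) ⁻¹' {g | g i = 0} = {ω | A ω i i = 0} := rfl
    rw [this]; exact hpi0
  rw [hsplit, hmul, hd, hpre2, hO]
  calc ENNReal.ofReal ((1 - p) ^ n) = ENNReal.ofReal (1 - p) ^ n := by
        rw [ENNReal.ofReal_pow (by linarith)]
    _ = ENNReal.ofReal (1 - p) * ENNReal.ofReal (1 - p) ^ (n - 1) := by
        have hexp : n - 1 + 1 = n := by omega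
        rw [← pow_succ', hexp]
    _ ≤ ENNReal.ofReal (1 - pi) * ENNReal.ofReal (1 - p) ^ (n - 1) := by
        gcongr
        all_goals linarith

lemma pair_prob_le (hA : AssumptionA P p A) [IsProbabilityMeasure P]
    {i i' : Fin n} (hii : i ≠ i') :
    P ({ω | ∀ j, A ω i j = 0} ∩ {ω | ∀ j, A ω i' j = 0})
      ≤ ENNReal.ofReal (1 - p) ^ (n - 1 + (n - 2)) := by
  classical
  set s₂ : Finset (Fin n × Fin n) := ((Finset.univ.erase i').erase i).image fun j => (i', j)
    with hs₂
  have hs₂mem : ∀ q : Fin n × Fin n, q ∈ s₂ ↔ q.1 = i' ∧ q.2 ≠ i' ∧ q.2 ≠ i := by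
    intro q
    constructor
    · intro hq
      obtain ⟨j, hj, rfl⟩ := Finset.mem_image.1 hq
      obtain ⟨hji, hj'⟩ := Finset.mem_erase.1 hj
      exact ⟨rfl, (Finset.mem_erase.1 hj').1, hji⟩
    · rintro ⟨h1, h2, h3⟩
      exact Finset.mem_image.2 ⟨q.2, Finset.mem_erase.2 ⟨h3,
        Finset.mem_erase.2 ⟨h2, Finset.mem_univ _⟩⟩, by rw [← h1]⟩
  set s₃ : Finset (Fin n × Fin n) := srow n i ∪ s₂ with hs₃
  have hdisj : Disjoint (srow n i) s₂ := by
    rw [Finset.disjoint_left]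
    intro q hq hq2
    exact hii ((srow_mem.1 hq).1.symm.trans ((hs₂mem q).1 hq2).1)
  have hcard : s₃.card = n - 1 + (n - 2) := by
    rw [hs₃, Finset.card_union_of_disjoint hdisj, srow_card, hs₂,
      Finset.card_image_of_injective _ (fun a b h => (Prod.ext_iff.1 h).2),
      Finset.card_erase_of_mem (Finset.mem_erase.2 ⟨hii, Finset.mem_univ _⟩),
      Finset.card_erase_of_mem (Finset.mem_univ i'), Finset.card_univ, Fintype.card_fin]
    omega
  have hod : ∀ q ∈ s₃, q.1 ≠ q.2 := by
    intro q hq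
    rcases Finset.mem_union.1 hq with h | h
    · exact srow_od q h
    · obtain ⟨h1, h2, _⟩ := (hs₂mem q).1 h
      rw [h1]; exact fun h => h2 h.symm
  have hmir : ∀ q ∈ s₃, (q.2, q.1) ∉ s₃ := by
    intro q hq hq'
    rcases Finset.mem_union.1 hq with h | h <;>
      rcases Finset.mem_union.1 hq' with h' | h'
    · exact (srow_mem.1 h).2 (srow_mem.1 h').1
    · obtain ⟨a1, _⟩ := srow_mem.1 h
      obtain ⟨_, _, b3⟩ := (hs₂mem _).1 h'
      exact b3 a1
    · obtain ⟨_, _, b3⟩ := (hs₂mem _).1 h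
      exact b3 (srow_mem.1 h').1
    · obtain ⟨a1, _, _⟩ := (hs₂mem _).1 h
      obtain ⟨_, b2, _⟩ := (hs₂mem _).1 h'
      exact b2 a1
  have hsub : {ω | ∀ j, A ω i j = 0} ∩ {ω | ∀ j, A ω i' j = 0}
      ⊆ {ω | ∀ q ∈ s₃, A ω q.1 q.2 = 0} := by
    rintro ω ⟨h1, h2⟩ q hq
    rcases Finset.mem_union.1 hq with h | h
    · obtain ⟨e1, _⟩ := srow_mem.1 h
      rw [e1]; exact h1 q.2
    · obtain ⟨e1, _, _⟩ := (hs₂mem q).1 h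
      rw [e1]; exact h2 q.2
  calc P ({ω | ∀ j, A ω i j = 0} ∩ {ω | ∀ j, A ω i' j = 0})
      ≤ P {ω | ∀ q ∈ s₃, A ω q.1 q.2 = 0} := measure_mono hsub
    _ = ENNReal.ofReal (1 - p) ^ s₃.card := prod_zero hA s₃ hod hmir
    _ = ENNReal.ofReal (1 - p) ^ (n - 1 + (n - 2)) := by rw [hcard]

end Aux

/-- below the threshold `np ≤ log(1/p)`, a zero row or column exists
with probability at least `1 - C̄ / log n`. -/
theorem zero_row_or_col_whp :
    ∃ Cb : ℝ, 0 < Cb ∧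
      ∀ (n : ℕ), 2 ≤ n →
      ∀ (p : ℝ) (Ωs : Type) [MeasurableSpace Ωs] (P : Measure Ωs),
        IsProbabilityMeasure P →
        ∀ A : Ωs → Matrix (Fin n) (Fin n) ℝ,
          0 < p → p < 1 → (n : ℝ) * p ≤ Real.log (1 / p) →
          AssumptionA P p A →
          ENNReal.ofReal (1 - Cb / Real.log n) ≤ P {ω | hasZeroRowOrCol (A ω)} := by
  classical
  refine ⟨24, by norm_num, ?_⟩
  intro n hn p Ωs _ P hP A hp0 hp1 hc hA
  haveI := hP
  set R : Fin n → Set Ωs := fun i => {ω | ∀ j, A ω i j = 0} with hRdef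
  have hRm : ∀ i, MeasurableSet (R i) := by
    intro i
    have : R i = ⋂ j, (fun ω => A ω i j) ⁻¹' {0} := by
      ext ω; simp [hRdef, Set.mem_iInter]
    rw [this]
    exact MeasurableSet.iInter fun j => meas_entry hA i j (measurableSet_singleton 0)
  set U : Set Ωs := ⋃ i, R i with hUdef
  have hUm : MeasurableSet U := MeasurableSet.iUnion hRm
  set f : Ωs → ℝ≥0∞ := fun ω => ∑ i : Fin n, (R i).indicator 1 ω with hfdef
  have hfm : Measurable f :=
    Finset.measurable_sum _ fun i _ => measurable_one.indicator (hRm i)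
  have hint1 : ∫⁻ ω, f ω ∂P = ∑ i : Fin n, P (R i) := by
    rw [hfdef]
    rw [lintegral_finset_sum _ fun i _ => measurable_one.indicator (hRm i)]
    exact Finset.sum_congr rfl fun i _ => lintegral_indicator_one (hRm i)
  have hint2 : ∫⁻ ω, f ω * f ω ∂P = ∑ i : Fin n, ∑ i' : Fin n, P (R i ∩ R i') := by
    have hptwise : ∀ ω, f ω * f ω
        = ∑ i : Fin n, ∑ i' : Fin n, (R i ∩ R i').indicator (1 : Ωs → ℝ≥0∞) ω := by
      intro ω
      rw [hfdef]
      rw [Finset.sum_mul_sum]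
      exact Finset.sum_congr rfl fun i _ => Finset.sum_congr rfl fun i' _ =>
        ind_mul_ind (R i) (R i') ω
    calc ∫⁻ ω, f ω * f ω ∂P
        = ∫⁻ ω, ∑ i : Fin n, ∑ i' : Fin n, (R i ∩ R i').indicator 1 ω ∂P := by
          exact lintegral_congr hptwise
      _ = ∑ i : Fin n, ∑ i' : Fin n, P (R i ∩ R i') := by
          rw [lintegral_finset_sum _ fun i _ => Finset.measurable_sum _ fun i' _ =>
            measurable_one.indicator ((hRm i).inter (hRm i'))]
          exact Finset.sum_congr rfl fun i _ => by
            rw [lintegral_finset_sum _ fun i' _ => measurable_one.indicator ((hRm i).inter (hRm i'))]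
            exact Finset.sum_congr rfl fun i' _ => lintegral_indicator_one ((hRm i).inter (hRm i'))
  set μE : ℝ≥0∞ := ∑ i : Fin n, P (R i) with hμdef
  set SE : ℝ≥0∞ := ∑ i : Fin n, ∑ i' : Fin n, P (R i ∩ R i') with hSdef
  have hμfin : μE ≠ ⊤ :=
    (ENNReal.sum_lt_top.2 fun i _ => measure_lt_top P _).ne
  have hSfin : SE ≠ ⊤ :=
    (ENNReal.sum_lt_top.2 fun i _ => (ENNReal.sum_lt_top.2 fun i' _ => measure_lt_top P _)).ne
  -- master inequality
  have hmaster : ∀ t : ℝ, 0 ≤ t → t ≤ 1 →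
      2 * t * μE.toReal ≤ (P U).toReal + t ^ 2 * SE.toReal := by
    intro t ht0 ht1
    set τ : ℝ≥0∞ := ENNReal.ofReal t with hτdef
    have hτfin : τ ≠ ⊤ := ENNReal.ofReal_ne_top
    have hptwise : ∀ ω, 2 * τ * f ω ≤ U.indicator 1 ω + τ ^ 2 * (f ω * f ω) := by
      intro ω
      by_cases hω : ω ∈ U
      · calc 2 * τ * f ω = 2 * (τ * f ω) := by ring
          _ ≤ 1 + (τ * f ω) ^ 2 := two_mul_le_one_add_sq _
          _ = U.indicator 1 ω + τ ^ 2 * (f ω * f ω) := by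
            rw [Set.indicator_of_mem hω]
            simp only [Pi.one_apply]
            ring
      · have hf0 : f ω = 0 := by
          rw [hfdef]
          exact Finset.sum_eq_zero fun i _ =>
            Set.indicator_of_notMem (fun hmem => hω (Set.mem_iUnion.2 ⟨i, hmem⟩)) _
        rw [hf0, mul_zero]
        exact zero_le
    have hLHS : ∫⁻ ω, (2 * τ) * f ω ∂P = 2 * τ * μE := by
      rw [lintegral_const_mul _ hfm, hint1]
    have hRHS : ∫⁻ ω, (U.indicator 1 ω + τ ^ 2 * (f ω * f ω)) ∂P = P U + τ ^ 2 * SE := by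
      rw [lintegral_add_left (measurable_one.indicator hUm)]
      rw [lintegral_indicator_one hUm]
      rw [lintegral_const_mul (f := fun ω => f ω * f ω) _ (hfm.mul hfm), hint2]
    have hle : 2 * τ * μE ≤ P U + τ ^ 2 * SE := by
      rw [← hLHS, ← hRHS]
      exact lintegral_mono fun ω => by
        simpa [mul_assoc] using hptwise ω
    have hRHSfin : P U + τ ^ 2 * SE ≠ ⊤ := by
      apply ENNReal.add_ne_top.2
      exact ⟨measure_ne_top P U, ENNReal.mul_ne_top (ENNReal.pow_ne_top hτfin) hSfin⟩
    have := ENNReal.toReal_mono hRHSfin hle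
    rw [ENNReal.toReal_mul, ENNReal.toReal_mul, ENNReal.toReal_ofNat,
      ENNReal.toReal_ofReal ht0] at this
    rw [ENNReal.toReal_add (measure_ne_top P U) (ENNReal.mul_ne_top (ENNReal.pow_ne_top hτfin) hSfin),
      ENNReal.toReal_mul, ENNReal.toReal_pow, ENNReal.toReal_ofReal ht0] at this
    exact this
  -- lower bound on mu
  have hq0 : (0 : ℝ) ≤ 1 - p := by linarith
  have hm : (n : ℝ) * (1 - p) ^ n ≤ μE.toReal := by
    have h1 : (n : ℝ≥0∞) * ENNReal.ofReal ((1 - p) ^ n) ≤ μE := by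
      calc (n : ℝ≥0∞) * ENNReal.ofReal ((1 - p) ^ n)
          = ∑ _i : Fin n, ENNReal.ofReal ((1 - p) ^ n) := by
            rw [Finset.sum_const, Finset.card_univ, Fintype.card_fin, nsmul_eq_mul]
        _ ≤ ∑ i : Fin n, P (R i) :=
            Finset.sum_le_sum fun i _ => row_prob_ge hA hp1.le (by omega) i
    have h2 := ENNReal.toReal_mono hμfin h1
    rwa [ENNReal.toReal_mul, ENNReal.toReal_natCast,
      ENNReal.toReal_ofReal (pow_nonneg hq0 n)] at h2
  -- upper bound on S
  have hpair : ∀ i i' : Fin n, i ≠ i' →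
      P (R i ∩ R i') ≤ ENNReal.ofReal ((1 - p) ^ (n - 1 + (n - 2))) := by
    intro i i' h
    have h3 := pair_prob_le hA h
    rwa [← ENNReal.ofReal_pow hq0] at h3
  have hofne : ((n : ℝ≥0∞) * ENNReal.ofReal ((1 - p) ^ (n - 1 + (n - 2)))) ≠ ⊤ :=
    ENNReal.mul_ne_top (ENNReal.natCast_ne_top n) ENNReal.ofReal_ne_top
  have hSle : SE ≤ μE + (n : ℝ≥0∞) * ((n : ℝ≥0∞) * ENNReal.ofReal ((1 - p) ^ (n - 1 + (n - 2)))) := by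
    have per : ∀ i : Fin n, ∑ i' : Fin n, P (R i ∩ R i')
        ≤ P (R i) + (n : ℝ≥0∞) * ENNReal.ofReal ((1 - p) ^ (n - 1 + (n - 2))) := by
      intro i
      rw [← Finset.add_sum_erase _ _ (Finset.mem_univ i), Set.inter_self]
      refine add_le_add_right ?_ _
      calc ∑ i' ∈ Finset.univ.erase i, P (R i ∩ R i')
          ≤ ∑ _i' ∈ Finset.univ.erase i, ENNReal.ofReal ((1 - p) ^ (n - 1 + (n - 2))) :=
            Finset.sum_le_sum fun i' hi' => hpair i i' (Finset.ne_of_mem_erase hi').symm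
        _ = (Finset.univ.erase i).card • ENNReal.ofReal ((1 - p) ^ (n - 1 + (n - 2))) :=
            Finset.sum_const _
        _ ≤ (n : ℝ≥0∞) * ENNReal.ofReal ((1 - p) ^ (n - 1 + (n - 2))) := by
            rw [nsmul_eq_mul]
            refine mul_le_mul_left ?_ _
            exact Nat.cast_le.2 (le_trans Finset.card_erase_le (by simp))
    calc SE ≤ ∑ i : Fin n,
          (P (R i) + (n : ℝ≥0∞) * ENNReal.ofReal ((1 - p) ^ (n - 1 + (n - 2)))) :=
          Finset.sum_le_sum fun i _ => per i
      _ = μE + (n : ℝ≥0∞) * ((n : ℝ≥0∞) * ENNReal.ofReal ((1 - p) ^ (n - 1 + (n - 2)))) := by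
          rw [Finset.sum_add_distrib, Finset.sum_const, Finset.card_univ, Fintype.card_fin,
            nsmul_eq_mul]
  have hsreal : SE.toReal ≤ μE.toReal + (n : ℝ) ^ 2 * (1 - p) ^ (n - 1 + (n - 2)) := by
    have h2 := ENNReal.toReal_mono
      (ENNReal.add_ne_top.2 ⟨hμfin, ENNReal.mul_ne_top (ENNReal.natCast_ne_top n) hofne⟩) hSle
    rw [ENNReal.toReal_add hμfin (ENNReal.mul_ne_top (ENNReal.natCast_ne_top n) hofne),
      ENNReal.toReal_mul, ENNReal.toReal_mul, ENNReal.toReal_natCast,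
      ENNReal.toReal_ofReal (pow_nonneg hq0 _)] at h2
    calc SE.toReal ≤ μE.toReal + (n : ℝ) * ((n : ℝ) * (1 - p) ^ (n - 1 + (n - 2))) := h2
      _ = μE.toReal + (n : ℝ) ^ 2 * (1 - p) ^ (n - 1 + (n - 2)) := by ring
  have hend := endgame hn hp0 hp1 hc hm hsreal hmaster
  have hsub : U ⊆ {ω | hasZeroRowOrCol (A ω)} := by
    intro ω hω
    obtain ⟨i, hi⟩ := Set.mem_iUnion.1 hω
    exact Or.inl ⟨i, hi⟩
  calc ENNReal.ofReal (1 - 24 / Real.log n) ≤ ENNReal.ofReal ((P U).toReal) :=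
        ENNReal.ofReal_le_ofReal hend
    _ = P U := ENNReal.ofReal_toReal (measure_ne_top P U)
    _ ≤ P {ω | hasZeroRowOrCol (A ω)} := measure_mono hsub
end
end

section
/- Let A be a deterministic n×n matrix with entries in {0,1}, let p ∈ (0,1) and δ₀ ∈ (0,1/10), and suppose: A has no zero row and no zero column; every row and every column of A has support of size at most C₁ np; the supports of light columns are pairwise disjoint; and for every j ∈ [n], at most r₀ light columns have support intersecting supp(col_j(A)). Then there exists a constant C, depending only on C₁ and r₀, such that every x ∈ S^{n-1} with ‖Ax‖₂ < 1/4 satisfies ‖x_{[n]\L(A)}‖₂ ≥ 1/(C np), where x_{[n]\L(A)} denotes the vector obtained from x by setting to zero all coordinates indexed by L(A). -/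
open MeasureTheory ProbabilityTheory Filter Matrix

noncomputable section

/-- Support of the `j`-th column of a matrix. -/
def colSupp {m n : ℕ} (A : Matrix (Fin m) (Fin n) ℝ) (j : Fin n) : Set (Fin m) :=
  {i | A i j ≠ 0}

/-- Support of the `i`-th row of a matrix. -/
def rowSupp {m n : ℕ} (A : Matrix (Fin m) (Fin n) ℝ) (i : Fin m) : Set (Fin n) :=
  {j | A i j ≠ 0}

/-- The set of light columns: columns whose support has at most `δ₀ n p` elements. -/
def lightSet {n : ℕ} (A : Matrix (Fin n) (Fin n) ℝ) (δ₀ p : ℝ) : Set (Fin n) :=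
  {j | ((colSupp A j).ncard : ℝ) ≤ δ₀ * ((n : ℝ) * p)}

/-- The folded matrix `fold(B) = B⁽¹⁾ − B⁽²⁾`, where `B⁽¹⁾, B⁽²⁾` consist of the first and
the next `⌊n/2⌋` rows of `B`. -/
def fold {n : ℕ} (B : Matrix (Fin n) (Fin n) ℝ) : Matrix (Fin (n / 2)) (Fin n) ℝ :=
  Matrix.of fun i j =>
    B ⟨i.1, by have h := i.2; omega⟩ j - B ⟨i.1 + n / 2, by have h := i.2; omega⟩ j

/-- The structural event `Ω_st` of Lemma 2.1: (1) no heavy rows or columns; (2) light columns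
have disjoint supports; (3) the number of light columns connected to any column is at most
`r₀`; (4) the support of a normal column has small intersection with those of the light ones
(for the folded matrix); (5) the extension property; (6) supports of columns of the matrix
and of its folded version are close in size. -/
def StructEvent {n : ℕ} (A : Matrix (Fin n) (Fin n) ℝ) (p δ₀ C₁ : ℝ) (r₀ : ℕ)
    (c₂ : ℝ) : Prop :=
  (∀ i : Fin n, ((rowSupp A i).ncard : ℝ) ≤ C₁ * ((n : ℝ) * p)) ∧
  (∀ j : Fin n, ((colSupp A j).ncard : ℝ) ≤ C₁ * ((n : ℝ) * p)) ∧
  (∀ i j : Fin n, i ≠ j → i ∈ lightSet A δ₀ p → j ∈ lightSet A δ₀ p →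
    colSupp A i ∩ colSupp A j = ∅) ∧
  (∀ j : Fin n,
    ({i | i ∈ lightSet A δ₀ p ∧ (colSupp A i ∩ colSupp A j).Nonempty}.ncard : ℕ) ≤ r₀) ∧
  (∀ j : Fin n, j ∉ lightSet A δ₀ p →
    (((colSupp (fold A) j ∩ ⋃ i ∈ lightSet A δ₀ p, colSupp (fold A) i).ncard : ℝ)
      ≤ δ₀ / 16 * ((n : ℝ) * p))) ∧
  (∀ I : Finset (Fin n), 2 ≤ I.card → (I.card : ℝ) ≤ c₂ / p →
    (∑ j ∈ I, ((colSupp (fold A) j).ncard : ℝ)) - δ₀ / 16 * ((n : ℝ) * p) * I.card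
      ≤ ((⋃ j ∈ I, colSupp (fold A) j).ncard : ℝ)) ∧
  (∀ j : Fin n,
    |((colSupp A j).ncard : ℝ) - ((colSupp (fold A) j).ncard : ℝ)| ≤ δ₀ / 8 * ((n : ℝ) * p))


lemma vnorm_eq_norm {n : ℕ} (x : Fin n → ℝ) :
    vnorm x = ‖(WithLp.equiv 2 (Fin n → ℝ)).symm x‖ := by
  rw [EuclideanSpace.norm_eq]; simp [vnorm, sq_abs]

lemma vnorm_nonneg {n : ℕ} (x : Fin n → ℝ) : 0 ≤ vnorm x := Real.sqrt_nonneg _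

lemma vnorm_sub_le {n : ℕ} (u v : Fin n → ℝ) : vnorm (u - v) ≤ vnorm u + vnorm v := by
  simp only [vnorm_eq_norm]; exact norm_sub_le _ _

lemma sq_vnorm {n : ℕ} (x : Fin n → ℝ) : vnorm x ^ 2 = ∑ i, x i ^ 2 :=
  Real.sq_sqrt (Finset.sum_nonneg fun i _ => sq_nonneg _)

set_option maxHeartbeats 1000000

/-- if a `{0,1}`-matrix has no zero row or column, no heavy rows or columns,
light columns with pairwise disjoint supports, and at most `r₀` light columns meeting any
given column, then any unit vector `x` with `‖Ax‖₂ < 1/4` puts at least `1/(Cnp)` of its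
Euclidean mass on coordinates outside the light columns. -/
theorem normal_coordinates_lower_bound :
    ∀ (C₁ : ℝ) (r₀ : ℕ), ∃ C : ℝ, 0 < C ∧
      ∀ (n : ℕ) (p δ₀ : ℝ) (A : Matrix (Fin n) (Fin n) ℝ),
        0 < p → p < 1 → 0 < δ₀ → δ₀ < 1 / 10 →
        (∀ i j, A i j = 0 ∨ A i j = 1) →
        ¬ hasZeroRowOrCol A →
        (∀ i : Fin n, ((rowSupp A i).ncard : ℝ) ≤ C₁ * ((n : ℝ) * p)) →
        (∀ j : Fin n, ((colSupp A j).ncard : ℝ) ≤ C₁ * ((n : ℝ) * p)) →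
        (∀ i j : Fin n, i ≠ j → i ∈ lightSet A δ₀ p → j ∈ lightSet A δ₀ p →
          colSupp A i ∩ colSupp A j = ∅) →
        (∀ j : Fin n,
          {i | i ∈ lightSet A δ₀ p ∧ (colSupp A i ∩ colSupp A j).Nonempty}.ncard ≤ r₀) →
        ∀ x : Fin n → ℝ, vnorm x = 1 → vnorm (A.mulVec x) < 1 / 4 →
          1 / (C * ((n : ℝ) * p)) ≤ vnorm ((lightSet A δ₀ p)ᶜ.indicator x) := by
  intro C₁ r₀
  refine ⟨2 * max C₁ 1, by positivity, ?_⟩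
  intro n p δ₀ A hp hp1 hδ hδ1 h01 hzero hrow hcol hdisj _hr x hx hAx
  classical
  -- n ≠ 0
  rcases Nat.eq_zero_or_pos n with hn0 | hn0
  · subst hn0; simp [vnorm] at hx
  -- no zero column
  simp only [hasZeroRowOrCol, not_or, not_exists] at hzero
  have hzcol : ∀ j : Fin n, ∃ i, A i j ≠ 0 := by
    intro j; by_contra h; push_neg at h; exact hzero.2 j h
  set L := lightSet A δ₀ p with hL
  set xL := L.indicator x with hxL
  set xN := Lᶜ.indicator x with hxN
  set K := C₁ * ((n : ℝ) * p) with hK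
  have hAsq : ∀ i j, A i j * A i j = A i j := by
    intro i j; rcases h01 i j with h | h <;> simp [h]
  have hAnn : ∀ i j, 0 ≤ A i j := by
    intro i j; rcases h01 i j with h | h <;> simp [h]
  -- row and column sums
  have hrowsum : ∀ i, ∑ j, A i j ≤ K := by
    intro i
    have h1 : ∑ j, A i j = ((rowSupp A i).ncard : ℝ) := by
      have h2 : ∑ j, A i j = ∑ j, if A i j ≠ 0 then (1:ℝ) else 0 := by
        refine Finset.sum_congr rfl fun j _ => ?_
        rcases h01 i j with h0 | h0 <;> simp [h0]
      rw [h2, Finset.sum_boole]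
      congr 1
      rw [← Set.ncard_coe_finset]
      congr 1; ext; simp [rowSupp]
    rw [h1]; exact hrow i
  have hcolsum : ∀ j, ∑ i, A i j ≤ K := by
    intro j
    have h1 : ∑ i, A i j = ((colSupp A j).ncard : ℝ) := by
      have h2 : ∑ i, A i j = ∑ i, if A i j ≠ 0 then (1:ℝ) else 0 := by
        refine Finset.sum_congr rfl fun i _ => ?_
        rcases h01 i j with h0 | h0 <;> simp [h0]
      rw [h2, Finset.sum_boole]
      congr 1
      rw [← Set.ncard_coe_finset]
      congr 1; ext; simp [colSupp]
    rw [h1]; exact hcol j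
  have hcolsum1 : ∀ j, (1:ℝ) ≤ ∑ i, A i j := by
    intro j
    obtain ⟨i0, hi0⟩ := hzcol j
    have h1 : A i0 j = 1 := (h01 i0 j).resolve_left hi0
    calc (1:ℝ) = A i0 j := h1.symm
    _ ≤ ∑ i, A i j := Finset.single_le_sum (fun i _ => hAnn i j) (Finset.mem_univ i0)
  have hK1 : (1:ℝ) ≤ K := le_trans (hcolsum1 ⟨0, hn0⟩) (hcolsum ⟨0, hn0⟩)
  -- Lemma A : ∑ j, xL j ^ 2 ≤ ∑ i, (A.mulVec xL i)^2
  have expand : ∑ i, (A.mulVec xL) i ^ 2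
      = ∑ j, ∑ k, (xL j * xL k) * ∑ i, A i j * A i k := by
    simp only [Matrix.mulVec, dotProduct, sq, Finset.sum_mul_sum]
    rw [Finset.sum_comm]
    refine Finset.sum_congr rfl fun j _ => ?_
    rw [Finset.sum_comm]
    refine Finset.sum_congr rfl fun k _ => ?_
    rw [Finset.mul_sum]
    refine Finset.sum_congr rfl fun i _ => ?_
    ring
  have offdiag : ∀ j k : Fin n, j ≠ k → (xL j * xL k) * (∑ i, A i j * A i k) = 0 := by
    intro j k hjk
    by_cases hj : j ∈ L
    · by_cases hk : k ∈ L
      · have hz : ∑ i, A i j * A i k = 0 := by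
          refine Finset.sum_eq_zero fun i _ => ?_
          by_contra h
          have hij : A i j ≠ 0 := fun h0 => h (by simp [h0])
          have hik : A i k ≠ 0 := fun h0 => h (by simp [h0])
          have hd := hdisj j k hjk hj hk
          have : i ∈ colSupp A j ∩ colSupp A k := ⟨hij, hik⟩
          rw [hd] at this
          exact this
        rw [hz, mul_zero]
      · simp [hxL, Set.indicator_of_notMem hk]
    · simp [hxL, Set.indicator_of_notMem hj]
  have collapse : ∑ j, ∑ k, (xL j * xL k) * ∑ i, A i j * A i k
      = ∑ j, xL j ^ 2 * ∑ i, A i j := by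
    refine Finset.sum_congr rfl fun j _ => ?_
    rw [Finset.sum_eq_single j]
    · have : ∑ i, A i j * A i j = ∑ i, A i j :=
        Finset.sum_congr rfl fun i _ => hAsq i j
      rw [this]; ring
    · intro k _ hkj; exact offdiag j k (Ne.symm hkj)
    · intro h; exact absurd (Finset.mem_univ j) h
  have hA : ∑ j, xL j ^ 2 ≤ ∑ i, (A.mulVec xL) i ^ 2 := by
    rw [expand, collapse]
    refine Finset.sum_le_sum fun j _ => ?_
    exact le_mul_of_one_le_right (sq_nonneg _) (hcolsum1 j)
  -- Lemma B : ∑ i, (A.mulVec xN i)^2 ≤ K^2 * ∑ j, xN j ^ 2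
  have hB : ∑ i, (A.mulVec xN) i ^ 2 ≤ K ^ 2 * ∑ j, xN j ^ 2 := by
    have step1 : ∀ i, (A.mulVec xN) i ^ 2 ≤ K * ∑ j, A i j * xN j ^ 2 := by
      intro i
      have hcs := Finset.sum_mul_sq_le_sq_mul_sq Finset.univ (fun j => A i j)
        (fun j => A i j * xN j)
      have h1 : ∑ j, A i j * (A i j * xN j) = (A.mulVec xN) i := by
        simp only [Matrix.mulVec, dotProduct]
        refine Finset.sum_congr rfl fun j _ => ?_
        rw [← mul_assoc, hAsq]
      have h2 : ∑ j, (A i j) ^ 2 = ∑ j, A i j := by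
        refine Finset.sum_congr rfl fun j _ => ?_
        rw [sq, hAsq]
      have h3 : ∑ j, (A i j * xN j) ^ 2 = ∑ j, A i j * xN j ^ 2 := by
        refine Finset.sum_congr rfl fun j _ => ?_
        rw [mul_pow, sq (A i j), hAsq]
      rw [h1, h2, h3] at hcs
      have h4 : (0:ℝ) ≤ ∑ j, A i j * xN j ^ 2 :=
        Finset.sum_nonneg fun j _ => mul_nonneg (hAnn i j) (sq_nonneg _)
      nlinarith [hrowsum i]
    calc ∑ i, (A.mulVec xN) i ^ 2 ≤ ∑ i, K * ∑ j, A i j * xN j ^ 2 :=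
          Finset.sum_le_sum fun i _ => step1 i
      _ = K * ∑ j, (∑ i, A i j) * xN j ^ 2 := by
          rw [← Finset.mul_sum, Finset.sum_comm]
          congr 1
          exact Finset.sum_congr rfl fun j _ => (Finset.sum_mul _ _ _).symm
      _ ≤ K * ∑ j, K * xN j ^ 2 := by
          refine mul_le_mul_of_nonneg_left (Finset.sum_le_sum fun j _ => ?_) (by linarith)
          exact mul_le_mul_of_nonneg_right (hcolsum j) (sq_nonneg _)
      _ = K ^ 2 * ∑ j, xN j ^ 2 := by rw [← Finset.mul_sum]; ring
  -- assemble
  set a := vnorm xN with ha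
  set b := vnorm xL with hb
  have ha0 : 0 ≤ a := vnorm_nonneg _
  have hb0 : 0 ≤ b := vnorm_nonneg _
  have hsplit : xL + xN = x := Set.indicator_self_add_compl L x
  have hab : b ^ 2 + a ^ 2 = 1 := by
    rw [hb, ha, sq_vnorm, sq_vnorm, ← Finset.sum_add_distrib]
    have h1 : ∑ i, (xL i ^ 2 + xN i ^ 2) = ∑ i, x i ^ 2 := by
      refine Finset.sum_congr rfl fun i _ => ?_
      by_cases hi : i ∈ L <;> simp [hxL, hxN, Set.indicator, hi]
    rw [h1, ← sq_vnorm x, hx]; norm_num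
  have hbA : b ≤ vnorm (A.mulVec xL) := by
    rw [hb, vnorm, vnorm]
    exact Real.sqrt_le_sqrt hA
  have hNA : vnorm (A.mulVec xN) ≤ K * a := by
    rw [ha, vnorm, vnorm]
    have := Real.sqrt_le_sqrt hB
    rw [Real.sqrt_mul (sq_nonneg K), Real.sqrt_sq (by linarith : (0:ℝ) ≤ K)] at this
    exact this
  have htri : vnorm (A.mulVec xL) ≤ vnorm (A.mulVec x) + vnorm (A.mulVec xN) := by
    have h1 : A.mulVec xL = A.mulVec x - A.mulVec xN := by
      rw [← hsplit, Matrix.mulVec_add]; abel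
    rw [h1]; exact vnorm_sub_le _ _
  have hbKa : b ≤ 1 / 4 + K * a := by
    have := le_trans hbA (le_trans htri (by linarith [hNA] : vnorm (A.mulVec x) + vnorm (A.mulVec xN) ≤ vnorm (A.mulVec x) + K * a))
    linarith
  -- final
  set M := 2 * max C₁ 1 * ((n : ℝ) * p) with hM
  have hnp : (0:ℝ) < (n : ℝ) * p := by
    have : (0:ℝ) < (n : ℝ) := by exact_mod_cast hn0
    positivity
  have hM2K : 2 * K ≤ M := by
    rw [hM, hK]
    have : C₁ ≤ max C₁ 1 := le_max_left _ _
    nlinarith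
  have hM2 : (2:ℝ) ≤ M := by linarith
  by_contra hcon
  push_neg at hcon
  have haM : a * M < 1 := by
    have hMpos : (0:ℝ) < M := by linarith
    rw [div_eq_mul_inv, one_mul] at hcon
    calc a * M < M⁻¹ * M := by exact mul_lt_mul_of_pos_right hcon hMpos
      _ = 1 := inv_mul_cancel₀ (by linarith)
  nlinarith [mul_nonneg ha0 (by linarith : (0:ℝ) ≤ M - 2 * K),
    mul_nonneg ha0 (by linarith : (0:ℝ) ≤ K - 1), sq_nonneg (a - 1/2), sq_nonneg b,
    mul_nonneg hb0 hb0, mul_nonneg ha0 ha0]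
end
end

section
/- Let v ∈ R^n be a fixed vector and let 𝐱 ∈ R^n be a random vector with i.i.d. Ber(p) coordinates, p ∈ (0,1). Then there exists an absolute constant C such that for every ε > 0 and every J ⊆ [n]: L( ⟨𝐱, v⟩, p^{1/2}(1−p)^{1/2} ‖v_J‖₂ ε ) ≤ L( ⟨𝐱_J, v_J⟩, p^{1/2}(1−p)^{1/2} ‖v_J‖₂ ε ) ≤ C ( ε + ‖v_J‖_∞ / ( p^{1/2}(1−p)^{1/2} ‖v_J‖₂ ) ). -/
open MeasureTheory ProbabilityTheory Filter Matrix

noncomputable section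

/-- The Lévy concentration function of a real random variable:
`L(Z,ε) = sup_u P(|Z − u| ≤ ε)`. -/
def levy {Ωs : Type*} [MeasurableSpace Ωs] (P : Measure Ωs) (Z : Ωs → ℝ) (ε : ℝ) : ENNReal :=
  ⨆ u : ℝ, P {ω | |Z ω - u| ≤ ε}

namespace LevyAux


open Real Set

variable {Ω : Type} [MeasurableSpace Ω] {P : Measure Ω}

lemma integrable_of_abs_le [IsFiniteMeasure P] {f : Ω → ℝ} (hf : Measurable f)
    (c : ℝ) (h : ∀ ω, |f ω| ≤ c) : Integrable f P :=
  (integrable_const c).mono' hf.aestronglyMeasurable (ae_of_all _ fun ω => by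
    simpa using h ω)

lemma isBer_integral [IsProbabilityMeasure P] {p : ℝ} (hp0 : 0 ≤ p) (hp1 : p ≤ 1)
    {X : Ω → ℝ} (hX : IsBer P p X) (f : ℝ → ℝ) :
    ∫ ω, f (X ω) ∂P = p * f 1 + (1 - p) * f 0 := by
  obtain ⟨hXm, h1, h0⟩ := hX
  set A : Set Ω := {ω | X ω = 1} with hAdef
  set B : Set Ω := {ω | X ω = 0} with hBdef
  have hA : MeasurableSet A := hXm (measurableSet_singleton 1)
  have hB : MeasurableSet B := hXm (measurableSet_singleton 0)
  have hdisj : Disjoint A B := by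
    rw [Set.disjoint_left]
    intro ω h1' h0'
    have e1 : X ω = 1 := h1'
    have e0 : X ω = 0 := h0'
    rw [e1] at e0; norm_num at e0
  have hABu : P (A ∪ B) = 1 := by
    rw [measure_union hdisj hB, h1, h0, ← ENNReal.ofReal_add hp0 (by linarith)]
    norm_num
  have hcompl : P ((A ∪ B)ᶜ) = 0 := by
    rw [measure_compl (hA.union hB) (measure_ne_top _ _), hABu, measure_univ, tsub_self]
  have hae : ∀ᵐ ω ∂P, ω ∈ A ∪ B := by
    rw [ae_iff]
    exact hcompl
  have heq : (fun ω => f (X ω)) =ᵐ[P]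
      fun ω => A.indicator (fun _ => f 1) ω + B.indicator (fun _ => f 0) ω := by
    filter_upwards [hae] with ω hω
    rcases hω with h | h
    · have hx : X ω = 1 := h
      have hnB : ω ∉ B := by
        intro hB'
        have : X ω = 0 := hB'
        rw [hx] at this; norm_num at this
      simp [Set.indicator_of_mem h, Set.indicator_of_notMem hnB, hx]
    · have hx : X ω = 0 := h
      have hnA : ω ∉ A := by
        intro hA'
        have : X ω = 1 := hA'
        rw [hx] at this; norm_num at this
      simp [Set.indicator_of_mem h, Set.indicator_of_notMem hnA, hx]
  rw [integral_congr_ae heq,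
    integral_add ((integrable_const (f 1)).indicator hA) ((integrable_const (f 0)).indicator hB),
    integral_indicator_const _ hA, integral_indicator_const _ hB, measureReal_def, measureReal_def, h1, h0,
    ENNReal.toReal_ofReal hp0, ENNReal.toReal_ofReal (by linarith : (0:ℝ) ≤ 1 - p)]
  simp [smul_eq_mul]


lemma integrable_mul_of_bdd [IsFiniteMeasure P] {f g : Ω → ℝ} (hf : Measurable f)
    (hg : Measurable g) (hbf : ∀ ω, |f ω| ≤ 1) (hbg : ∀ ω, |g ω| ≤ 1) :
    Integrable (fun ω => f ω * g ω) P :=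
  integrable_of_abs_le (hf.mul hg) 1 fun ω => by
    rw [abs_mul]
    exact mul_le_one₀ (hbf ω) (abs_nonneg _) (hbg ω)

lemma charFun_sq_eq [IsProbabilityMeasure P] {n : ℕ} {p : ℝ} (hp0 : 0 ≤ p) (hp1 : p ≤ 1)
    {x : Ω → Fin n → ℝ} (hiid : IIDBer P p (fun i : Fin n => fun ω => x ω i))
    (v : Fin n → ℝ) (t : ℝ) (s : Finset (Fin n)) :
    (∫ ω, Real.cos (t * ∑ i ∈ s, x ω i * v i) ∂P) ^ 2
      + (∫ ω, Real.sin (t * ∑ i ∈ s, x ω i * v i) ∂P) ^ 2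
      = ∏ i ∈ s, (1 - 2 * (p * (1 - p)) * (1 - Real.cos (t * v i))) := by
  classical
  have hxm : ∀ i : Fin n, Measurable fun ω => x ω i := fun i => (hiid.2 i).1
  set Y : Fin n → Ω → ℝ := fun i ω => x ω i * v i with hYdef
  have hYm : ∀ i, Measurable (Y i) := fun i => (hxm i).mul_const _
  have hYindep : iIndepFun Y P :=
    hiid.1.comp (fun i => fun y => y * v i) (fun i => measurable_id.mul_const (v i))
  induction s using Finset.induction_on with
  | empty => simp
  | @insert j s hj ih =>
    have hSm : Measurable fun ω => ∑ i ∈ s, x ω i * v i :=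
      Finset.measurable_sum s fun i _ => hYm i
    have hind0 : IndepFun (∑ i ∈ s, Y i) (Y j) P :=
      hYindep.indepFun_finset_sum_of_notMem hYm hj
    have hind : IndepFun (fun ω => ∑ i ∈ s, x ω i * v i) (fun ω => x ω j * v j) P := by
      have hfe : (∑ i ∈ s, Y i) = fun ω => ∑ i ∈ s, x ω i * v i := by
        funext ω; simp [Y, Finset.sum_apply]
      rwa [hfe] at hind0
    have hintc : ∀ (f : Ω → ℝ), Measurable f → Integrable (fun ω => Real.cos (f ω)) P :=
      fun f hf => integrable_of_abs_le hf.cos 1 fun ω => Real.abs_cos_le_one _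
    have hints : ∀ (f : Ω → ℝ), Measurable f → Integrable (fun ω => Real.sin (f ω)) P :=
      fun f hf => integrable_of_abs_le hf.sin 1 fun ω => Real.abs_sin_le_one _
    have hSm' : Measurable fun ω => t * ∑ i ∈ s, x ω i * v i := hSm.const_mul t
    have hjm' : Measurable fun ω => t * (x ω j * v j) := (hYm j).const_mul t
    set cb := ∫ ω, Real.cos (t * (x ω j * v j)) ∂P with hcbdef
    set sb := ∫ ω, Real.sin (t * (x ω j * v j)) ∂P with hsbdef
    set ca := ∫ ω, Real.cos (t * ∑ i ∈ s, x ω i * v i) ∂P with hcadef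
    set sa := ∫ ω, Real.sin (t * ∑ i ∈ s, x ω i * v i) ∂P with hsadef
    have hindcc : IndepFun (fun ω => Real.cos (t * (x ω j * v j)))
        (fun ω => Real.cos (t * ∑ i ∈ s, x ω i * v i)) P :=
      hind.symm.comp ((measurable_id.const_mul t).cos) ((measurable_id.const_mul t).cos)
    have hindss : IndepFun (fun ω => Real.sin (t * (x ω j * v j)))
        (fun ω => Real.sin (t * ∑ i ∈ s, x ω i * v i)) P :=
      hind.symm.comp ((measurable_id.const_mul t).sin) ((measurable_id.const_mul t).sin)
    have hindcs : IndepFun (fun ω => Real.cos (t * (x ω j * v j)))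
        (fun ω => Real.sin (t * ∑ i ∈ s, x ω i * v i)) P :=
      hind.symm.comp ((measurable_id.const_mul t).cos) ((measurable_id.const_mul t).sin)
    have hindsc : IndepFun (fun ω => Real.sin (t * (x ω j * v j)))
        (fun ω => Real.cos (t * ∑ i ∈ s, x ω i * v i)) P :=
      hind.symm.comp ((measurable_id.const_mul t).sin) ((measurable_id.const_mul t).cos)
    have hsum : ∀ ω : Ω, (∑ i ∈ insert j s, x ω i * v i) = x ω j * v j + ∑ i ∈ s, x ω i * v i :=
      fun ω => Finset.sum_insert hj
    have hcos : (∫ ω, Real.cos (t * ∑ i ∈ insert j s, x ω i * v i) ∂P)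
        = cb * ca - sb * sa := by
      have heq : (fun ω => Real.cos (t * ∑ i ∈ insert j s, x ω i * v i))
          = fun ω => Real.cos (t * (x ω j * v j)) * Real.cos (t * ∑ i ∈ s, x ω i * v i)
            - Real.sin (t * (x ω j * v j)) * Real.sin (t * ∑ i ∈ s, x ω i * v i) := by
        funext ω
        rw [hsum ω, mul_add, Real.cos_add]
      have hcc : (∫ ω, Real.cos (t * (x ω j * v j)) * Real.cos (t * ∑ i ∈ s, x ω i * v i) ∂P)
          = cb * ca := hindcc.integral_fun_mul_eq_mul_integral (hintc _ hjm').1 (hintc _ hSm').1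
      have hss : (∫ ω, Real.sin (t * (x ω j * v j)) * Real.sin (t * ∑ i ∈ s, x ω i * v i) ∂P)
          = sb * sa := hindss.integral_fun_mul_eq_mul_integral (hints _ hjm').1 (hints _ hSm').1
      rw [heq, integral_sub
        (integrable_mul_of_bdd hjm'.cos hSm'.cos (fun ω => Real.abs_cos_le_one _)
          (fun ω => Real.abs_cos_le_one _))
        (integrable_mul_of_bdd hjm'.sin hSm'.sin (fun ω => Real.abs_sin_le_one _)
          (fun ω => Real.abs_sin_le_one _)), hcc, hss]
    have hsin : (∫ ω, Real.sin (t * ∑ i ∈ insert j s, x ω i * v i) ∂P)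
        = sb * ca + cb * sa := by
      have heq : (fun ω => Real.sin (t * ∑ i ∈ insert j s, x ω i * v i))
          = fun ω => Real.sin (t * (x ω j * v j)) * Real.cos (t * ∑ i ∈ s, x ω i * v i)
            + Real.cos (t * (x ω j * v j)) * Real.sin (t * ∑ i ∈ s, x ω i * v i) := by
        funext ω
        rw [hsum ω, mul_add, Real.sin_add]
      have hsc : (∫ ω, Real.sin (t * (x ω j * v j)) * Real.cos (t * ∑ i ∈ s, x ω i * v i) ∂P)
          = sb * ca := hindsc.integral_fun_mul_eq_mul_integral (hints _ hjm').1 (hintc _ hSm').1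
      have hcs : (∫ ω, Real.cos (t * (x ω j * v j)) * Real.sin (t * ∑ i ∈ s, x ω i * v i) ∂P)
          = cb * sa := hindcs.integral_fun_mul_eq_mul_integral (hintc _ hjm').1 (hints _ hSm').1
      rw [heq, integral_add
        (integrable_mul_of_bdd hjm'.sin hSm'.cos (fun ω => Real.abs_sin_le_one _)
          (fun ω => Real.abs_cos_le_one _))
        (integrable_mul_of_bdd hjm'.cos hSm'.sin (fun ω => Real.abs_cos_le_one _)
          (fun ω => Real.abs_sin_le_one _)), hsc, hcs]
    have hcb : cb = p * Real.cos (t * v j) + (1 - p) := by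
      rw [hcbdef, isBer_integral hp0 hp1 (hiid.2 j) (fun y => Real.cos (t * (y * v j)))]
      norm_num
    have hsb : sb = p * Real.sin (t * v j) := by
      rw [hsbdef, isBer_integral hp0 hp1 (hiid.2 j) (fun y => Real.sin (t * (y * v j)))]
      norm_num
    rw [Finset.prod_insert hj, ← ih, hcos, hsin, hcb, hsb]
    have hpy := Real.sin_sq_add_cos_sq (t * v j)
    linear_combination (p ^ 2 * (ca ^ 2 + sa ^ 2)) * hpy

lemma charFun_le [IsProbabilityMeasure P] {n : ℕ} {p : ℝ} (hp0 : 0 < p) (hp1 : p < 1)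
    {x : Ω → Fin n → ℝ} (hiid : IIDBer P p (fun i : Fin n => fun ω => x ω i))
    (v : Fin n → ℝ) (J : Finset (Fin n)) (t u : ℝ)
    (ht : ∀ i ∈ J, |t * v i| ≤ Real.pi) :
    (∫ ω, Real.cos (t * (∑ i ∈ J, x ω i * v i) - t * u) ∂P)
      ≤ Real.exp (-(2 / Real.pi ^ 2 * (p * (1 - p)) * (∑ i ∈ J, v i ^ 2)) * t ^ 2) := by
  classical
  have hxm : ∀ i : Fin n, Measurable fun ω => x ω i := fun i => (hiid.2 i).1
  have hSm : Measurable fun ω => ∑ i ∈ J, x ω i * v i :=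
    Finset.measurable_sum J fun i _ => (hxm i).mul_const _
  have hSm' : Measurable fun ω => t * ∑ i ∈ J, x ω i * v i := hSm.const_mul t
  set b : ℝ := 2 / Real.pi ^ 2 * (p * (1 - p)) * (∑ i ∈ J, v i ^ 2) with hbdef
  set ca := ∫ ω, Real.cos (t * ∑ i ∈ J, x ω i * v i) ∂P with hcadef
  set sa := ∫ ω, Real.sin (t * ∑ i ∈ J, x ω i * v i) ∂P with hsadef
  have hI : (∫ ω, Real.cos (t * (∑ i ∈ J, x ω i * v i) - t * u) ∂P)
      = ca * Real.cos (t * u) + sa * Real.sin (t * u) := by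
    have heq : (fun ω => Real.cos (t * (∑ i ∈ J, x ω i * v i) - t * u))
        = fun ω => Real.cos (t * ∑ i ∈ J, x ω i * v i) * Real.cos (t * u)
          + Real.sin (t * ∑ i ∈ J, x ω i * v i) * Real.sin (t * u) := by
      funext ω
      rw [Real.cos_sub]
    rw [heq, integral_add
      ((integrable_of_abs_le hSm'.cos 1 fun ω => Real.abs_cos_le_one _).mul_const _)
      ((integrable_of_abs_le hSm'.sin 1 fun ω => Real.abs_sin_le_one _).mul_const _),
      integral_mul_const, integral_mul_const]
  have hsq : ca ^ 2 + sa ^ 2 = ∏ i ∈ J, (1 - 2 * (p * (1 - p)) * (1 - Real.cos (t * v i))) :=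
    charFun_sq_eq hp0.le hp1.le hiid v t J
  have hpq1 : p * (1 - p) ≤ 1 / 4 := by nlinarith [sq_nonneg (p - (1 - p))]
  have hpq0 : 0 ≤ p * (1 - p) := by nlinarith
  have hprod : (∏ i ∈ J, (1 - 2 * (p * (1 - p)) * (1 - Real.cos (t * v i))))
      ≤ Real.exp (∑ i ∈ J, -(2 * (p * (1 - p)) * (1 - Real.cos (t * v i)))) := by
    rw [Real.exp_sum]
    apply Finset.prod_le_prod
    · intro i _
      nlinarith [Real.neg_one_le_cos (t * v i), Real.cos_le_one (t * v i)]
    · intro i _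
      have h := Real.add_one_le_exp (-(2 * (p * (1 - p)) * (1 - Real.cos (t * v i))))
      linarith
  have hper : ∀ i ∈ J, 2 / Real.pi ^ 2 * (t * v i) ^ 2 ≤ 1 - Real.cos (t * v i) := by
    intro i hi
    have h := Real.cos_le_one_sub_mul_cos_sq (ht i hi)
    linarith
  have hsum2 : 2 / Real.pi ^ 2 * t ^ 2 * (∑ i ∈ J, v i ^ 2)
      ≤ ∑ i ∈ J, (1 - Real.cos (t * v i)) := by
    calc 2 / Real.pi ^ 2 * t ^ 2 * ∑ i ∈ J, v i ^ 2
        = ∑ i ∈ J, 2 / Real.pi ^ 2 * (t * v i) ^ 2 := by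
          rw [Finset.mul_sum]
          apply Finset.sum_congr rfl
          intros; ring
      _ ≤ _ := Finset.sum_le_sum hper
  have hexpo : (∑ i ∈ J, -(2 * (p * (1 - p)) * (1 - Real.cos (t * v i))))
      ≤ -(2 * b) * t ^ 2 := by
    have h1 : (∑ i ∈ J, -(2 * (p * (1 - p)) * (1 - Real.cos (t * v i))))
        = -(2 * (p * (1 - p)) * ∑ i ∈ J, (1 - Real.cos (t * v i))) := by
      rw [Finset.mul_sum, ← Finset.sum_neg_distrib]
    rw [h1, hbdef]
    nlinarith [hsum2, hpq0]
  have hEsq : ca ^ 2 + sa ^ 2 ≤ (Real.exp (-b * t ^ 2)) ^ 2 := by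
    have h2 : (Real.exp (-b * t ^ 2)) ^ 2 = Real.exp (-(2 * b) * t ^ 2) := by
      rw [sq, ← Real.exp_add]; ring_nf
    rw [h2, hsq]
    exact hprod.trans (Real.exp_le_exp.2 hexpo)
  have h1 : (ca * Real.cos (t * u) + sa * Real.sin (t * u)) ^ 2 ≤ ca ^ 2 + sa ^ 2 := by
    nlinarith [Real.sin_sq_add_cos_sq (t * u),
      sq_nonneg (ca * Real.sin (t * u) - sa * Real.cos (t * u))]
  rw [hI]
  calc ca * Real.cos (t * u) + sa * Real.sin (t * u)
      ≤ |ca * Real.cos (t * u) + sa * Real.sin (t * u)| := le_abs_self _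
    _ = Real.sqrt ((ca * Real.cos (t * u) + sa * Real.sin (t * u)) ^ 2) :=
        (Real.sqrt_sq_eq_abs _).symm
    _ ≤ Real.sqrt ((Real.exp (-b * t ^ 2)) ^ 2) := Real.sqrt_le_sqrt (h1.trans hEsq)
    _ = Real.exp (-b * t ^ 2) := Real.sqrt_sq (Real.exp_pos _).le





lemma fejer_integral {T : ℝ} (hT : 0 < T) (y : ℝ) :
    (∫ t in (-T)..T, (1 - |t| / T) * Real.cos (t * y)) =
      if y = 0 then T else 2 * (1 - Real.cos (T * y)) / (T * y ^ 2) := by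
  have hcont : Continuous fun t : ℝ => (1 - |t| / T) * Real.cos (t * y) := by
    fun_prop
  have hcont2 : Continuous fun t : ℝ => (1 - t / T) * Real.cos (t * y) := by
    fun_prop
  have hsplit : (∫ t in (-T)..T, (1 - |t| / T) * Real.cos (t * y))
      = (∫ t in (-T)..(0:ℝ), (1 - |t| / T) * Real.cos (t * y))
        + ∫ t in (0:ℝ)..T, (1 - |t| / T) * Real.cos (t * y) :=
    (intervalIntegral.integral_add_adjacent_intervals (hcont.intervalIntegrable _ _)
      (hcont.intervalIntegrable _ _)).symm
  have hneg : (∫ t in (-T)..(0:ℝ), (1 - |t| / T) * Real.cos (t * y))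
      = ∫ t in (0:ℝ)..T, (1 - |t| / T) * Real.cos (t * y) := by
    have h := intervalIntegral.integral_comp_neg
      (a := 0) (b := T) (f := fun t => (1 - |t| / T) * Real.cos (t * y))
    simp only [neg_zero] at h
    rw [← h]
    apply intervalIntegral.integral_congr
    intro t _
    simp [abs_neg, neg_mul, Real.cos_neg]
  have hpos : (∫ t in (0:ℝ)..T, (1 - |t| / T) * Real.cos (t * y))
      = ∫ t in (0:ℝ)..T, (1 - t / T) * Real.cos (t * y) := by
    apply intervalIntegral.integral_congr
    intro t ht
    rw [Set.uIcc_of_le hT.le] at ht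
    dsimp only
    rw [abs_of_nonneg ht.1]
  have I0val : (∫ t in (0:ℝ)..T, (1 - t / T) * Real.cos (t * y))
      = if y = 0 then T / 2 else (1 - Real.cos (T * y)) / (T * y ^ 2) := by
    by_cases hy : y = 0
    · subst hy
      rw [if_pos rfl]
      simp only [mul_zero, Real.cos_zero, mul_one]
      rw [intervalIntegral.integral_sub (intervalIntegrable_const)
        (((by fun_prop : Continuous fun t : ℝ => t / T)).intervalIntegrable _ _)]
      simp only [intervalIntegral.integral_div, integral_id,
        intervalIntegral.integral_const, smul_eq_mul]
      field_simp
      ring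
    · rw [if_neg hy]
      have hftc : ∀ t ∈ Set.uIcc (0:ℝ) T,
          HasDerivAt (fun s => (1 - s / T) * (Real.sin (s * y) / y)
            - Real.cos (s * y) / (T * y ^ 2)) ((1 - t / T) * Real.cos (t * y)) t := by
        intro t _
        have h1 : HasDerivAt (fun s : ℝ => 1 - s / T) (-(1 / T)) t := by
          simpa using ((hasDerivAt_id t).div_const T).const_sub 1
        have h2 : HasDerivAt (fun s : ℝ => Real.sin (s * y)) (Real.cos (t * y) * y) t := by
          exact (Real.hasDerivAt_sin (t * y)).comp t (hasDerivAt_mul_const y)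
        have h3 : HasDerivAt (fun s : ℝ => Real.cos (s * y)) (-Real.sin (t * y) * y) t := by
          exact (Real.hasDerivAt_cos (t * y)).comp t (hasDerivAt_mul_const y)
        have h := (h1.mul (h2.div_const y)).sub (h3.div_const (T * y ^ 2))
        refine h.congr_deriv ?_
        field_simp
        ring
      rw [intervalIntegral.integral_eq_sub_of_hasDerivAt hftc
        (hcont2.intervalIntegrable _ _)]
      have hTne : T ≠ 0 := hT.ne'
      simp only [zero_mul, Real.sin_zero, Real.cos_zero, div_self hTne]
      field_simp
      ring
  rw [hsplit, hneg, hpos, I0val]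
  split_ifs with hy
  · ring
  · ring


lemma levy_add_le [IsProbabilityMeasure P] {A B : Ω → ℝ} (hA : Measurable A) (hB : Measurable B)
    (h : IndepFun B A P) (r : ℝ) :
    levy P (fun ω => A ω + B ω) r ≤ levy P A r := by
  rw [levy, levy]
  apply iSup_le
  intro u
  haveI := Measure.isProbabilityMeasure_map (μ := P) hB.aemeasurable
  haveI := Measure.isProbabilityMeasure_map (μ := P) hA.aemeasurable
  have hmap : P.map (fun ω => (B ω, A ω)) = (P.map B).prod (P.map A) :=
    (indepFun_iff_map_prod_eq_prod_map_map hB.aemeasurable hA.aemeasurable).1 h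
  have hE : MeasurableSet {z : ℝ × ℝ | |z.2 + z.1 - u| ≤ r} :=
    measurableSet_le (((measurable_snd.add measurable_fst).sub_const u).abs) measurable_const
  have key : P {ω | |A ω + B ω - u| ≤ r}
      = ∫⁻ b, (P.map A) {a | |a + b - u| ≤ r} ∂(P.map B) := by
    have h1 : P {ω | |A ω + B ω - u| ≤ r}
        = (P.map fun ω => (B ω, A ω)) {z : ℝ × ℝ | |z.2 + z.1 - u| ≤ r} := by
      rw [Measure.map_apply (hB.prodMk hA) hE]
      rfl
    rw [h1, hmap, Measure.prod_apply hE]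
    rfl
  rw [key]
  calc (∫⁻ b, (P.map A) {a | |a + b - u| ≤ r} ∂(P.map B))
      ≤ ∫⁻ _, (⨆ u' : ℝ, P {ω | |A ω - u'| ≤ r}) ∂(P.map B) := by
        apply lintegral_mono
        intro b
        dsimp only
        have hset : MeasurableSet {a : ℝ | |a + b - u| ≤ r} :=
          measurableSet_le (((measurable_id.add_const b).sub_const u).abs) measurable_const
        rw [Measure.map_apply hA hset]
        have heq : (A ⁻¹' {a : ℝ | |a + b - u| ≤ r}) = {ω | |A ω - (u - b)| ≤ r} := by
          ext ω
          simp only [Set.mem_preimage, Set.mem_setOf_eq]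
          rw [show A ω + b - u = A ω - (u - b) by ring]
        rw [heq]
        exact le_iSup (fun u' : ℝ => P {ω | |A ω - u'| ≤ r}) (u - b)
    _ = ⨆ u' : ℝ, P {ω | |A ω - u'| ≤ r} := by
        rw [lintegral_const, measure_univ, mul_one]


end LevyAux

open LevyAux Real

set_option maxHeartbeats 2000000 in
/-- Berry–Esséen bound on the Lévy concentration function of `⟨x, v⟩` for a
Bernoulli random vector `x` and a fixed vector `v`, restricted to a set `J` of coordinates. -/
theorem levy_concentration_bound :
    ∃ C : ℝ, 0 < C ∧
      ∀ (n : ℕ) (p : ℝ) (Ωs : Type) [MeasurableSpace Ωs] (P : Measure Ωs),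
        IsProbabilityMeasure P →
        ∀ x : Ωs → Fin n → ℝ,
          0 < p → p < 1 →
          IIDBer P p (fun i : Fin n => fun ω => x ω i) →
          ∀ (v : Fin n → ℝ) (J : Finset (Fin n)), (∃ i ∈ J, v i ≠ 0) →
            ∀ ε : ℝ, 0 < ε →
              levy P (fun ω => ∑ i, x ω i * v i)
                  (Real.sqrt p * Real.sqrt (1 - p) *
                    vnorm (fun i => if i ∈ J then v i else 0) * ε)
                ≤ levy P (fun ω => ∑ i ∈ J, x ω i * v i)
                  (Real.sqrt p * Real.sqrt (1 - p) *
                    vnorm (fun i => if i ∈ J then v i else 0) * ε) ∧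
              levy P (fun ω => ∑ i ∈ J, x ω i * v i)
                  (Real.sqrt p * Real.sqrt (1 - p) *
                    vnorm (fun i => if i ∈ J then v i else 0) * ε)
                ≤ ENNReal.ofReal (C * (ε +
                    (⨆ i : {i : Fin n // i ∈ J}, |v i.1|) /
                      (Real.sqrt p * Real.sqrt (1 - p) *
                        vnorm (fun i => if i ∈ J then v i else 0)))) := by
  classical
  refine ⟨10, by norm_num, ?_⟩
  intro n p Ωs _ P hP x hp0 hp1 hiid v J hJ ε hε
  haveI := hP
  obtain ⟨i₀, hi₀J, hi₀⟩ := hJ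
  set SJ : Ωs → ℝ := fun ω => ∑ i ∈ J, x ω i * v i with hSJdef
  set W : ℝ := ∑ i ∈ J, v i ^ 2 with hWdef
  have hW0 : 0 < W := by
    have h1 : v i₀ ^ 2 ≤ W :=
      Finset.single_le_sum (f := fun i => v i ^ 2) (fun i _ => sq_nonneg _) hi₀J
    have h2 : 0 < v i₀ ^ 2 := by positivity
    linarith
  set Wv : ℝ := vnorm (fun i => if i ∈ J then v i else 0) with hWvdef
  have hWv : Wv = Real.sqrt W := by
    rw [hWvdef, vnorm]
    congr 1
    have hxx : ∀ i : Fin n, (if i ∈ J then v i else 0) ^ 2 = if i ∈ J then v i ^ 2 else 0 :=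
      fun i => by split <;> simp
    simp_rw [hxx]
    rw [Finset.sum_ite_mem, Finset.univ_inter, hWdef]
  have hWvpos : 0 < Wv := by rw [hWv]; exact Real.sqrt_pos.2 hW0
  have hWvsq : Wv ^ 2 = W := by rw [hWv, Real.sq_sqrt hW0.le]
  set N : ℝ := Real.sqrt p * Real.sqrt (1 - p) * Wv with hNdef
  have hp1' : (0:ℝ) < 1 - p := by linarith
  have hNpos : 0 < N := by
    rw [hNdef]
    exact mul_pos (mul_pos (Real.sqrt_pos.2 hp0) (Real.sqrt_pos.2 hp1')) hWvpos
  have hNsq : N ^ 2 = p * (1 - p) * W := by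
    rw [hNdef, mul_pow, mul_pow, Real.sq_sqrt hp0.le, Real.sq_sqrt hp1'.le, hWvsq]
  set M : ℝ := ⨆ i : {i : Fin n // i ∈ J}, |v i.1| with hMdef
  haveI hne : Nonempty {i : Fin n // i ∈ J} := ⟨⟨i₀, hi₀J⟩⟩
  have hMb : ∀ i ∈ J, |v i| ≤ M := by
    intro i hi
    have h := le_ciSup (f := fun i : {i : Fin n // i ∈ J} => |v i.1|)
      (Set.Finite.bddAbove (Set.finite_range _)) ⟨i, hi⟩
    simpa [hMdef] using h
  have hM0 : 0 < M := lt_of_lt_of_le (abs_pos.2 hi₀) (hMb i₀ hi₀J)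
  have hxm : ∀ i : Fin n, Measurable fun ω => x ω i := fun i => (hiid.2 i).1
  have hSJm : Measurable SJ := Finset.measurable_sum J fun i _ => (hxm i).mul_const _
  have hSCm : Measurable fun ω => ∑ i ∈ Jᶜ, x ω i * v i :=
    Finset.measurable_sum _ fun i _ => (hxm i).mul_const _
  constructor
  · -- first inequality
    have hYindep : iIndepFun (fun i (ω : Ωs) => x ω i * v i) P :=
      hiid.1.comp (fun i => fun y => y * v i) (fun i => measurable_id.mul_const (v i))
    have hfin := hYindep.indepFun_finset Jᶜ J disjoint_compl_left
      (fun i => (hxm i).mul_const _)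
    have hg1 : Measurable fun z : {i // i ∈ Jᶜ} → ℝ => ∑ i, z i :=
      Finset.measurable_sum _ fun i _ => measurable_pi_apply i
    have hg2 : Measurable fun z : {i // i ∈ J} → ℝ => ∑ i, z i :=
      Finset.measurable_sum _ fun i _ => measurable_pi_apply i
    have hcomp := hfin.comp hg1 hg2
    have he1 : ((fun z : {i // i ∈ Jᶜ} → ℝ => ∑ i, z i)
        ∘ fun a (i : {i // i ∈ Jᶜ}) => x a i.1 * v i.1)
        = fun ω => ∑ i ∈ Jᶜ, x ω i * v i := by
      funext ω
      show (∑ i : {i // i ∈ Jᶜ}, x ω i.1 * v i.1) = ∑ i ∈ Jᶜ, x ω i * v i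
      exact Finset.sum_coe_sort Jᶜ fun i => x ω i * v i
    have he2 : ((fun z : {i // i ∈ J} → ℝ => ∑ i, z i)
        ∘ fun a (i : {i // i ∈ J}) => x a i.1 * v i.1)
        = SJ := by
      funext ω
      show (∑ i : {i // i ∈ J}, x ω i.1 * v i.1) = ∑ i ∈ J, x ω i * v i
      exact Finset.sum_coe_sort J fun i => x ω i * v i
    rw [he1, he2] at hcomp
    have hfull : (fun ω : Ωs => ∑ i, x ω i * v i)
        = fun ω => SJ ω + ∑ i ∈ Jᶜ, x ω i * v i := by
      funext ω
      rw [hSJdef]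
      exact (Finset.sum_add_sum_compl J fun i => x ω i * v i).symm
    rw [hfull]
    exact LevyAux.levy_add_le hSJm hSCm hcomp _
  · -- second inequality
    set T : ℝ := min (1 / (N * ε)) (π / (2 * M)) with hTdef
    have hT0 : 0 < T :=
      lt_min (one_div_pos.2 (mul_pos hNpos hε)) (div_pos Real.pi_pos (by linarith))
    have hrle : N * ε ≤ 1 / T := by
      rw [le_div_iff₀ hT0]
      calc N * ε * T ≤ N * ε * (1 / (N * ε)) :=
            mul_le_mul_of_nonneg_left (min_le_left _ _) (mul_pos hNpos hε).le
        _ = 1 := by field_simp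
    have hTM : T ≤ π / (2 * M) := min_le_right _ _
    have hinvT : 1 / T ≤ N * ε + M := by
      rcases min_cases (1 / (N * ε)) (π / (2 * M)) with ⟨hmin, _⟩ | ⟨hmin, _⟩
      · rw [hTdef, hmin, one_div_one_div]
        linarith
      · rw [hTdef, hmin, one_div_div]
        rw [div_le_iff₀ Real.pi_pos]
        nlinarith [mul_pos hNpos hε, Real.pi_gt_three]
    set g : ℝ → ℝ := fun z => if z = 0 then T else 2 * (1 - Real.cos (T * z)) / (T * z ^ 2)
      with hgdef
    have hπ0 : (0:ℝ) < π := Real.pi_pos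
    have hπ3 : (3:ℝ) < π := Real.pi_gt_three
    have hg0 : ∀ z, 0 ≤ g z := by
      intro z
      rw [hgdef]
      dsimp only
      split_ifs with h
      · exact hT0.le
      · have hz2 : 0 < z ^ 2 := lt_of_le_of_ne (sq_nonneg z) (Ne.symm (pow_ne_zero 2 h))
        apply div_nonneg
        · nlinarith [Real.cos_le_one (T * z)]
        · positivity
    have hgT : ∀ z, g z ≤ T := by
      intro z
      rw [hgdef]
      dsimp only
      split_ifs with h
      · exact le_refl T
      · have hz2 : 0 < z ^ 2 := lt_of_le_of_ne (sq_nonneg z) (Ne.symm (pow_ne_zero 2 h))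
        rw [div_le_iff₀ (mul_pos hT0 hz2)]
        have hc := Real.one_sub_sq_div_two_le_cos (x := T * z)
        nlinarith
    have hgbig : ∀ z, |z| ≤ 1 / T → 4 / π ^ 2 * T ≤ g z := by
      intro z hz
      rw [hgdef]
      dsimp only
      split_ifs with h
      · rw [div_mul_eq_mul_div, div_le_iff₀ (by nlinarith : (0:ℝ) < π ^ 2)]
        nlinarith [mul_nonneg hT0.le (by nlinarith : (0:ℝ) ≤ π ^ 2 - 9)]
      · have hz2 : 0 < z ^ 2 := lt_of_le_of_ne (sq_nonneg z) (Ne.symm (pow_ne_zero 2 h))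
        have habs : |T * z| ≤ 1 := by
          rw [abs_mul, abs_of_nonneg hT0.le]
          calc T * |z| ≤ T * (1 / T) := mul_le_mul_of_nonneg_left hz hT0.le
            _ = 1 := by field_simp
        have hcos := Real.cos_le_one_sub_mul_cos_sq (x := T * z) (by linarith)
        rw [le_div_iff₀ (mul_pos hT0 hz2)]
        have h2 : 2 / π ^ 2 * (T * z) ^ 2 ≤ 1 - Real.cos (T * z) := by linarith
        calc 4 / π ^ 2 * T * (T * z ^ 2) = 2 * (2 / π ^ 2 * (T * z) ^ 2) := by ring
          _ ≤ 2 * (1 - Real.cos (T * z)) := by linarith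
    have hgm : Measurable g := by
      rw [hgdef]
      exact Measurable.ite (measurableSet_eq) measurable_const
        (((measurable_const.sub ((measurable_id.const_mul T).cos)).const_mul 2).div
          ((measurable_id.pow_const 2).const_mul T))
    have hπ2pos : (0:ℝ) < π ^ 2 := by nlinarith
    set c : ℝ := π ^ 2 / (4 * T) with hcdef
    have hc0 : 0 < c := div_pos hπ2pos (by linarith)
    set b : ℝ := 2 / π ^ 2 * (p * (1 - p)) * W with hbdef
    have hb0 : 0 < b :=
      mul_pos (mul_pos (by positivity) (mul_pos hp0 hp1')) hW0
    have key : ∀ u : ℝ, P {ω | |SJ ω - u| ≤ N * ε} ≤ ENNReal.ofReal (10 * (ε + M / N)) := by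
      intro u
      set ν : Measure ℝ := volume.restrict (Set.Ioc (-T) T) with hν
      haveI : IsFiniteMeasure ν := by
        constructor
        rw [hν, Measure.restrict_apply_univ]
        exact measure_Ioc_lt_top
      have hFm : Measurable (Function.uncurry fun (ω : Ωs) (t : ℝ) =>
          (1 - |t| / T) * Real.cos (t * (SJ ω - u))) := by
        apply Measurable.mul
        · exact measurable_const.sub ((measurable_snd.abs).div_const T)
        · exact (measurable_snd.mul ((hSJm.comp measurable_fst).sub_const u)).cos
      have haeF : ∀ᵐ q ∂(P.prod ν), ‖Function.uncurry (fun (ω : Ωs) (t : ℝ) =>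
          (1 - |t| / T) * Real.cos (t * (SJ ω - u))) q‖ ≤ (1:ℝ) := by
        rw [ae_iff]
        have hnull : (P.prod ν) (Set.univ ×ˢ {t : ℝ | T < |t|}) = 0 := by
          rw [Measure.prod_prod]
          have hν0 : ν {t : ℝ | T < |t|} = 0 := by
            have hint : {t : ℝ | T < |t|} ∩ Set.Ioc (-T) T = ∅ := by
              rw [Set.eq_empty_iff_forall_notMem]
              rintro t ⟨h1, h2⟩
              have h3 : |t| ≤ T := abs_le.2 ⟨by linarith [h2.1], h2.2⟩
              exact absurd h1 (not_lt.2 h3)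
            rw [hν, Measure.restrict_apply (measurableSet_lt measurable_const measurable_abs),
              hint, measure_empty]
          rw [hν0, mul_zero]
        refine measure_mono_null ?_ hnull
        intro q hq
        refine Set.mem_prod.2 ⟨Set.mem_univ _, ?_⟩
        by_contra hq2
        apply hq
        have habs : |q.2| ≤ T := le_of_not_gt hq2
        have hw0 : 0 ≤ 1 - |q.2| / T := by
          rw [sub_nonneg, div_le_one hT0]; exact habs
        have hw1 : 1 - |q.2| / T ≤ 1 := by
          have : 0 ≤ |q.2| / T := by positivity
          linarith
        show ‖(1 - |q.2| / T) * Real.cos (q.2 * (SJ q.1 - u))‖ ≤ (1:ℝ)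
        rw [Real.norm_eq_abs, abs_mul, abs_of_nonneg hw0]
        calc (1 - |q.2| / T) * |Real.cos (q.2 * (SJ q.1 - u))|
            ≤ 1 * 1 := mul_le_mul hw1 (Real.abs_cos_le_one _) (abs_nonneg _) (by norm_num)
          _ = 1 := by norm_num
      have hFint : Integrable (Function.uncurry fun (ω : Ωs) (t : ℝ) =>
          (1 - |t| / T) * Real.cos (t * (SJ ω - u))) (P.prod ν) :=
        (integrable_const (1:ℝ)).mono' hFm.aestronglyMeasurable haeF
      have hfej : ∀ ω, g (SJ ω - u) = ∫ t, (1 - |t| / T) * Real.cos (t * (SJ ω - u)) ∂ν := by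
        intro ω
        rw [hgdef]
        dsimp only
        rw [← LevyAux.fejer_integral hT0 (SJ ω - u),
          intervalIntegral.integral_of_le (by linarith : -T ≤ T), hν]
      have hAsub : {ω | |SJ ω - u| ≤ N * ε} ⊆ {ω | |SJ ω - u| ≤ 1 / T} :=
        fun ω hω => le_trans hω hrle
      have hA' : MeasurableSet {ω | |SJ ω - u| ≤ 1 / T} :=
        measurableSet_le ((hSJm.sub_const u).abs) measurable_const
      have hgint : Integrable (fun ω => c * g (SJ ω - u)) P := by
        apply integrable_of_abs_le (((hgm.comp (hSJm.sub_const u))).const_mul c) (c * T)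
        intro ω
        show |c * g (SJ ω - u)| ≤ c * T
        rw [abs_of_nonneg (mul_nonneg hc0.le (hg0 _))]
        exact mul_le_mul_of_nonneg_left (hgT _) hc0.le
      have step1 : P {ω | |SJ ω - u| ≤ 1 / T}
          ≤ ENNReal.ofReal (∫ ω, c * g (SJ ω - u) ∂P) := by
        rw [← lintegral_indicator_one hA',
          ofReal_integral_eq_lintegral_ofReal hgint
            (ae_of_all _ fun ω => mul_nonneg hc0.le (hg0 _))]
        apply lintegral_mono
        intro ω
        by_cases hω : ω ∈ {ω | |SJ ω - u| ≤ 1 / T}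
        · rw [Set.indicator_of_mem hω]
          apply ENNReal.one_le_ofReal.2
          have h1 := hgbig (SJ ω - u) hω
          have h2 : c * (4 / π ^ 2 * T) = 1 := by
            rw [hcdef]
            field_simp
          calc (1:ℝ) = c * (4 / π ^ 2 * T) := h2.symm
            _ ≤ c * g (SJ ω - u) := mul_le_mul_of_nonneg_left h1 hc0.le
        · rw [Set.indicator_of_notMem hω]
          exact zero_le
      have hswap : (∫ ω, g (SJ ω - u) ∂P)
          = ∫ t, (∫ ω, (1 - |t| / T) * Real.cos (t * (SJ ω - u)) ∂P) ∂ν := by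
        rw [show (fun ω => g (SJ ω - u))
            = fun ω => ∫ t, (1 - |t| / T) * Real.cos (t * (SJ ω - u)) ∂ν from funext hfej]
        exact integral_integral_swap hFint
      have hbound : ∀ t ∈ Set.Ioc (-T) T,
          (∫ ω, (1 - |t| / T) * Real.cos (t * (SJ ω - u)) ∂P) ≤ Real.exp (-b * t ^ 2) := by
        intro t ht
        have htT : |t| ≤ T := abs_le.2 ⟨by linarith [ht.1], ht.2⟩
        have htv : ∀ i ∈ J, |t * v i| ≤ π := by
          intro i hi
          rw [abs_mul]
          calc |t| * |v i| ≤ T * M :=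
                mul_le_mul htT (hMb i hi) (abs_nonneg _) hT0.le
            _ ≤ π / (2 * M) * M := mul_le_mul_of_nonneg_right hTM hM0.le
            _ = π / 2 := by field_simp
            _ ≤ π := by linarith
        have hIe : (∫ ω, Real.cos (t * (SJ ω - u)) ∂P) ≤ Real.exp (-b * t ^ 2) := by
          have hI := LevyAux.charFun_le hp0 hp1 hiid v J t u htv
          have heq : (fun ω => Real.cos (t * (SJ ω - u)))
              = fun ω => Real.cos (t * (∑ i ∈ J, x ω i * v i) - t * u) := by
            funext ω
            rw [hSJdef, mul_sub]
          rw [heq, hbdef, hWdef]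
          exact hI
        have hw0 : 0 ≤ 1 - |t| / T := by
          rw [sub_nonneg, div_le_one hT0]; exact htT
        have hw1 : 1 - |t| / T ≤ 1 := by
          have : 0 ≤ |t| / T := by positivity
          linarith
        rw [integral_const_mul]
        rcases le_or_gt (∫ ω, Real.cos (t * (SJ ω - u)) ∂P) 0 with hI0 | hI0
        · calc (1 - |t| / T) * ∫ ω, Real.cos (t * (SJ ω - u)) ∂P
              ≤ 0 := mul_nonpos_of_nonneg_of_nonpos hw0 hI0
            _ ≤ Real.exp (-b * t ^ 2) := (Real.exp_pos _).le
        · calc (1 - |t| / T) * ∫ ω, Real.cos (t * (SJ ω - u)) ∂P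
              ≤ 1 * ∫ ω, Real.cos (t * (SJ ω - u)) ∂P :=
                mul_le_mul_of_nonneg_right hw1 hI0.le
            _ = ∫ ω, Real.cos (t * (SJ ω - u)) ∂P := one_mul _
            _ ≤ Real.exp (-b * t ^ 2) := hIe
      have hmarg : Integrable (fun t => ∫ ω, (1 - |t| / T) * Real.cos (t * (SJ ω - u)) ∂P) ν :=
        hFint.integral_prod_right
      have hstep2 : (∫ t, (∫ ω, (1 - |t| / T) * Real.cos (t * (SJ ω - u)) ∂P) ∂ν)
          ≤ ∫ t, Real.exp (-b * t ^ 2) ∂ν := by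
        rw [hν]
        refine setIntegral_mono_on ?_ ?_ measurableSet_Ioc hbound
        · exact hmarg
        · exact (integrable_exp_neg_mul_sq hb0).integrableOn
      have hstep3 : (∫ t, Real.exp (-b * t ^ 2) ∂ν) ≤ 4 / N := by
        have h1 : (∫ t, Real.exp (-b * t ^ 2) ∂ν) ≤ ∫ t : ℝ, Real.exp (-b * t ^ 2) := by
          rw [hν]
          exact setIntegral_le_integral (integrable_exp_neg_mul_sq hb0)
            (ae_of_all _ fun t => (Real.exp_pos _).le)
        have h2 : (∫ t : ℝ, Real.exp (-b * t ^ 2)) = Real.sqrt (π / b) := integral_gaussian b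
        have h3 : Real.sqrt (π / b) ≤ 4 / N := by
          have hN2 : (0:ℝ) < N ^ 2 := pow_pos hNpos 2
          have hπb : π / b ≤ 16 / N ^ 2 := by
            rw [div_le_div_iff₀ hb0 hN2, hNsq, hbdef]
            have hpqW : 0 < p * (1 - p) * W := mul_pos (mul_pos hp0 hp1') hW0
            have hkey : π ≤ 32 / π ^ 2 := by
              rw [le_div_iff₀ hπ2pos]
              nlinarith [Real.pi_lt_d2]
            calc π * (p * (1 - p) * W) ≤ 32 / π ^ 2 * (p * (1 - p) * W) :=
                  mul_le_mul_of_nonneg_right hkey hpqW.le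
              _ = 16 * (2 / π ^ 2 * (p * (1 - p)) * W) := by ring
          calc Real.sqrt (π / b) ≤ Real.sqrt (16 / N ^ 2) := Real.sqrt_le_sqrt hπb
            _ = 4 / N := by
                rw [show (16:ℝ) / N ^ 2 = (4 / N) ^ 2 by rw [div_pow]; norm_num,
                  Real.sqrt_sq (div_nonneg (by norm_num) hNpos.le)]
        rw [h2] at h1
        exact h1.trans h3
      have hreal : (∫ ω, c * g (SJ ω - u) ∂P) ≤ 10 * (ε + M / N) := by
        rw [integral_const_mul]
        have hint2 : (∫ ω, g (SJ ω - u) ∂P) ≤ 4 / N := by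
          rw [hswap]
          exact hstep2.trans hstep3
        have hc4 : c * (4 / N) = π ^ 2 / (T * N) := by
          rw [hcdef]
          field_simp
        have hfinal : π ^ 2 / (T * N) ≤ 10 * (ε + M / N) := by
          have hπsq : π ^ 2 ≤ 10 := by nlinarith [Real.pi_lt_d2, Real.pi_pos]
          rw [div_le_iff₀ (mul_pos hT0 hNpos)]
          have h5 : 1 ≤ (N * ε + M) * T := by
            have := (div_le_iff₀ hT0).1 hinvT
            linarith
          have heq2 : 10 * (ε + M / N) * (T * N) = 10 * ((N * ε + M) * T) := by
            field_simp
          rw [heq2]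
          nlinarith [h5]
        calc c * ∫ ω, g (SJ ω - u) ∂P ≤ c * (4 / N) :=
              mul_le_mul_of_nonneg_left hint2 hc0.le
          _ = π ^ 2 / (T * N) := hc4
          _ ≤ 10 * (ε + M / N) := hfinal
      calc P {ω | |SJ ω - u| ≤ N * ε} ≤ P {ω | |SJ ω - u| ≤ 1 / T} := measure_mono hAsub
        _ ≤ ENNReal.ofReal (∫ ω, c * g (SJ ω - u) ∂P) := step1
        _ ≤ ENNReal.ofReal (10 * (ε + M / N)) := ENNReal.ofReal_le_ofReal hreal
    rw [levy]
    exact iSup_le key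
end
end
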